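/- arXiv:2603.07838 — 4 statements merged into one kernel-verified Lean document; each statement's English description precedes it below -/
import Mathlib

section
/- Let μ = {μ_t}_{t>0} be a factorizing family over [0,1]×L. For 0 ≤ s < t ≤ 1 define the restriction–translate map R_{s,t} : 𝒞_1 → 𝒞_{t−s} by R_{s,t}(Z) = (Z ∩ ([s,t]×L)) − (s,0), where −(s,0) shifts the time coordinate by s. Then the pushforward measure (R_{s,t})_*μ_1 and the measure μ_{t−s} are mutually absolutely continuous. -/
open MeasureTheory Set
open scoped ENNReal NNReal

namespace RandomSets

variable (L : Type) [TopologicalSpace L]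

/-- The time strip `[0,t] × L` inside `ℝ × L`. -/
def strip (t : ℝ) : Set (ℝ × L) := Set.Icc (0:ℝ) t ×ˢ (Set.univ : Set L)

lemma isClosed_strip (t : ℝ) : IsClosed (strip L t) :=
  isClosed_Icc.prod isClosed_univ

/-- Closed subsets of `[0,t] × L`. -/
def Cl (t : ℝ) : Type := {F : Set (ℝ × L) // IsClosed F ∧ F ⊆ strip L t}

variable {L}

lemma isClosed_fstImage (f g : ℝ → ℝ) (hg : Continuous g)
    (hgf : ∀ x, g (f x) = x) (hfg : ∀ x, f (g x) = x)
    {A : Set (ℝ × L)} (hA : IsClosed A) :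
    IsClosed ((fun p : ℝ × L => (f p.1, p.2)) '' A) := by
  have h : (fun p : ℝ × L => (f p.1, p.2)) '' A
      = (fun p : ℝ × L => (g p.1, p.2)) ⁻¹' A := by
    ext p
    constructor
    · rintro ⟨q, hq, rfl⟩
      simpa [hgf] using hq
    · intro hp
      exact ⟨(g p.1, p.2), hp, by simp [hfg]⟩
  rw [h]
  exact hA.preimage (by fun_prop)

variable (L)

/-- The Fell topology on `Cl L t`. -/
def fellTop (t : ℝ) : TopologicalSpace (Cl L t) :=
  TopologicalSpace.generateFrom
    ({S | ∃ U : Set (ℝ × L), IsOpen U ∧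
        S = {F : Cl L t | (F.1 ∩ (U ∩ strip L t)).Nonempty}} ∪
     {S | ∃ K : Set (ℝ × L), IsCompact K ∧ K ⊆ strip L t ∧
        S = {F : Cl L t | F.1 ∩ K = ∅}})

instance (t : ℝ) : TopologicalSpace (Cl L t) := fellTop L t

/-- `Σ_t`, the Borel σ-field of the Fell topology. -/
instance (t : ℝ) : MeasurableSpace (Cl L t) := borel (Cl L t)

variable {L}

/-- Concatenation: `Z₁ ⊕_{s,t} Z₂ = Z₁ ∪ (s + Z₂)` as a closed subset of `[0,s+t] × L`. -/
noncomputable def concat (s t : ℝ) (Z₁ : Cl L s) (Z₂ : Cl L t) : Cl L (s + t) :=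
  ⟨(Z₁.1 ∪ (fun p : ℝ × L => (p.1 + s, p.2)) '' Z₂.1) ∩ strip L (s + t), by
    refine ⟨IsClosed.inter ?_ (isClosed_strip L _), Set.inter_subset_right⟩
    exact Z₁.2.1.union (isClosed_fstImage (· + s) (· - s) (by fun_prop)
      (fun x => by ring) (fun x => by ring) Z₂.2.1)⟩

/-- Concatenation as a map on pairs. -/
noncomputable def concatMap (s t : ℝ) : Cl L s × Cl L t → Cl L (s + t) :=
  fun p => concat s t p.1 p.2

/-- A factorizing family of probability measures over `[0,1] × L` (Definition 2.2 (i)–(ii)). -/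
def IsFactorizing (μ : (t : ℝ) → Measure (Cl L t)) : Prop :=
  (∀ t : ℝ, 0 < t → IsProbabilityMeasure (μ t)) ∧
  (∀ s t : ℝ, 0 < s → 0 < t →
    μ (s + t) ≪ Measure.map (concatMap s t) ((μ s).prod (μ t)) ∧
    Measure.map (concatMap s t) ((μ s).prod (μ t)) ≪ μ (s + t)) ∧
  (∀ t : ℝ, 0 < t → ∀ r ∈ Set.Icc (0:ℝ) t,
    μ t {Z : Cl L t | ∃ ℓ : L, (r, ℓ) ∈ Z.1} = 0)

/-- The restriction–translate map `R_{s,t} : 𝒞_1 → 𝒞_{t-s}`,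
`Z ↦ (Z ∩ ([s,t] × L)) - (s,0)`. -/
noncomputable def restrictTranslate (s t : ℝ) (Z : Cl L 1) : Cl L (t - s) :=
  ⟨(fun p : ℝ × L => (p.1 - s, p.2)) '' (Z.1 ∩ (Set.Icc s t ×ˢ (Set.univ : Set L))), by
    constructor
    · exact isClosed_fstImage (· - s) (· + s) (by fun_prop)
        (fun x => by ring) (fun x => by ring)
        (Z.2.1.inter (isClosed_Icc.prod isClosed_univ))
    · rintro p ⟨q, ⟨-, hq⟩, rfl⟩
      simp only [Set.mem_prod, Set.mem_Icc, Set.mem_univ, and_true] at hq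
      simp only [strip, Set.mem_prod, Set.mem_Icc, Set.mem_univ, and_true]
      constructor <;> linarith [hq.1, hq.2]⟩

/-! ### Auxiliary machinery -/

section Aux

variable (L) in
/-- The generating family (subbasis) of the Fell topology. -/
def fellSub (t : ℝ) : Set (Set (Cl L t)) :=
  {S | ∃ U : Set (ℝ × L), IsOpen U ∧
      S = {F : Cl L t | (F.1 ∩ (U ∩ strip L t)).Nonempty}} ∪
  {S | ∃ K : Set (ℝ × L), IsCompact K ∧ K ⊆ strip L t ∧
      S = {F : Cl L t | F.1 ∩ K = ∅}}

lemma fellTop_eq_generateFrom (t : ℝ) :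
    fellTop L t = TopologicalSpace.generateFrom (fellSub L t) := rfl

lemma isOpen_of_mem_fellSub {t : ℝ} {S : Set (Cl L t)} (h : S ∈ fellSub L t) : IsOpen S :=
  TopologicalSpace.isOpen_generateFrom_of_mem h

instance (t : ℝ) : BorelSpace (Cl L t) := ⟨rfl⟩

lemma isOpen_missSet {t : ℝ} {K : Set (ℝ × L)} (hK : IsCompact K) (hKs : K ⊆ strip L t) :
    IsOpen {F : Cl L t | F.1 ∩ K = ∅} :=
  isOpen_of_mem_fellSub (Or.inr ⟨K, hK, hKs, rfl⟩)

lemma measurableSet_hitSet_compact {t : ℝ} {K : Set (ℝ × L)} (hK : IsCompact K)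
    (hKs : K ⊆ strip L t) :
    MeasurableSet {F : Cl L t | (F.1 ∩ K).Nonempty} := by
  have : {F : Cl L t | (F.1 ∩ K).Nonempty} = {F : Cl L t | F.1 ∩ K = ∅}ᶜ := by
    ext F
    simp [Set.nonempty_iff_ne_empty]
  rw [this]
  exact ((isOpen_missSet hK hKs).measurableSet).compl

lemma measurableSet_hitSet_inter [SecondCountableTopology L] [LocallyCompactSpace L] [T2Space L]
    {t : ℝ} {V C : Set (ℝ × L)} (hV : IsOpen V) (hC : IsClosed C) (hCs : C ⊆ strip L t) :
    MeasurableSet {F : Cl L t | (F.1 ∩ (V ∩ C)).Nonempty} := by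
  classical
  set B : Set (Set (ℝ × L)) := TopologicalSpace.countableBasis (ℝ × L) with hB
  have key : {F : Cl L t | (F.1 ∩ (V ∩ C)).Nonempty}
      = ⋃ b ∈ {b ∈ B | IsCompact (closure b) ∧ closure b ⊆ V},
          {F : Cl L t | (F.1 ∩ (closure b ∩ C)).Nonempty} := by
    ext F
    simp only [Set.mem_setOf_eq, Set.mem_iUnion, Set.mem_sep_iff, exists_prop]
    constructor
    · rintro ⟨p, hpF, hpV, hpC⟩
      obtain ⟨K, hKc, hpint, hKV⟩ := exists_compact_subset hV hpV
      obtain ⟨b, hbB, hpb, hbint⟩ :=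
        (TopologicalSpace.isBasis_countableBasis (ℝ × L)).exists_subset_of_mem_open hpint
          isOpen_interior
      have hcb : closure b ⊆ K :=
        (closure_mono hbint).trans (closure_minimal interior_subset hKc.isClosed)
      exact ⟨b, ⟨hbB, hKc.of_isClosed_subset isClosed_closure hcb, hcb.trans hKV⟩,
        p, hpF, subset_closure hpb, hpC⟩
    · rintro ⟨b, ⟨hbB, hbc, hbV⟩, p, hpF, hpb, hpC⟩
      exact ⟨p, hpF, hbV hpb, hpC⟩
  rw [key]
  refine MeasurableSet.biUnion
    (((TopologicalSpace.countable_countableBasis (ℝ × L)).mono (Set.sep_subset _ _))) ?_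
  rintro b ⟨hbB, hbc, hbV⟩
  exact measurableSet_hitSet_compact (hbc.inter_right hC)
    ((Set.inter_subset_right).trans hCs)

theorem borel_le_generate [SecondCountableTopology L] [LocallyCompactSpace L] [T2Space L]
    (t : ℝ) :
    (inferInstance : MeasurableSpace (Cl L t))
      ≤ MeasurableSpace.generateFrom (fellSub L t) := by
  classical
  set B : Set (Set (ℝ × L)) := TopologicalSpace.countableBasis (ℝ × L) with hB
  set SC : Set (Set (Cl L t)) :=
    ((fun b : Set (ℝ × L) => {F : Cl L t | (F.1 ∩ (b ∩ strip L t)).Nonempty}) '' B) ∪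
    ((fun I : Set (Set (ℝ × L)) =>
        {F : Cl L t | F.1 ∩ ((⋃ b ∈ I, closure b) ∩ strip L t) = ∅}) ''
      {I | (I.Finite ∧ I ⊆ B) ∧ ∀ b ∈ I, IsCompact (closure b)}) with hSC
  have hSCcnt : SC.Countable := by
    refine (((TopologicalSpace.countable_countableBasis (ℝ × L)).image _).union ?_)
    exact (((countable_setOf_finite_subset
      (TopologicalSpace.countable_countableBasis (ℝ × L))).mono
        (fun I hI => hI.1)).image _)
  have hSCsub : SC ⊆ fellSub L t := by
    rintro S (⟨b, hb, rfl⟩ | ⟨I, ⟨⟨hIf, hIB⟩, hIc⟩, rfl⟩)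
    · exact Or.inl ⟨b, TopologicalSpace.isOpen_of_mem_countableBasis hb, rfl⟩
    · exact Or.inr ⟨(⋃ b ∈ I, closure b) ∩ strip L t,
        ((hIf.isCompact_biUnion fun b hb => hIc b hb).inter_right (isClosed_strip L t)),
        Set.inter_subset_right, rfl⟩
  -- every subbasic set is open in the topology generated by the countable family `SC`
  have hopen : ∀ S ∈ fellSub L t, TopologicalSpace.GenerateOpen SC S := by
    rintro S (⟨U, hU, rfl⟩ | ⟨K, hK, hKs, rfl⟩)
    · have key : {F : Cl L t | (F.1 ∩ (U ∩ strip L t)).Nonempty}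
          = ⋃₀ ((fun b : Set (ℝ × L) =>
              {F : Cl L t | (F.1 ∩ (b ∩ strip L t)).Nonempty}) '' {b ∈ B | b ⊆ U}) := by
        ext F
        simp only [Set.mem_setOf_eq, Set.mem_sUnion, Set.mem_image, Set.mem_sep_iff]
        constructor
        · rintro ⟨p, hpF, hpU, hps⟩
          obtain ⟨b, hbB, hpb, hbU⟩ :=
            (TopologicalSpace.isBasis_countableBasis (ℝ × L)).exists_subset_of_mem_open hpU hU
          exact ⟨_, ⟨b, ⟨hbB, hbU⟩, rfl⟩, p, hpF, hpb, hps⟩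
        · rintro ⟨T, ⟨b, ⟨hbB, hbU⟩, rfl⟩, p, hpF, hpb, hps⟩
          exact ⟨p, hpF, hbU hpb, hps⟩
      rw [key]
      refine TopologicalSpace.GenerateOpen.sUnion _ ?_
      rintro T ⟨b, hb, rfl⟩
      exact TopologicalSpace.GenerateOpen.basic _ (Or.inl ⟨b, hb.1, rfl⟩)
    · have key : {F : Cl L t | F.1 ∩ K = ∅}
          = ⋃₀ ((fun I : Set (Set (ℝ × L)) =>
              {F : Cl L t | F.1 ∩ ((⋃ b ∈ I, closure b) ∩ strip L t) = ∅}) ''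
              {I | ((I.Finite ∧ I ⊆ B) ∧ ∀ b ∈ I, IsCompact (closure b)) ∧
                K ⊆ ⋃ b ∈ I, closure b}) := by
        ext F
        simp only [Set.mem_setOf_eq, Set.mem_sUnion, Set.mem_image]
        constructor
        · intro hF
          have hFo : IsOpen (F.1)ᶜ := F.2.1.isOpen_compl
          have hpt : ∀ x : ℝ × L, x ∈ K →
              ∃ b, b ∈ B ∧ x ∈ b ∧ IsCompact (closure b) ∧ closure b ⊆ (F.1)ᶜ := by
            intro x hx
            have hxF : x ∈ (F.1)ᶜ := fun hc =>
              (Set.eq_empty_iff_forall_notMem.1 hF x) ⟨hc, hx⟩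
            obtain ⟨Kx, hKx, hxint, hKxF⟩ := exists_compact_subset hFo hxF
            obtain ⟨b, hbB, hxb, hbint⟩ :=
              (TopologicalSpace.isBasis_countableBasis (ℝ × L)).exists_subset_of_mem_open hxint
                isOpen_interior
            have hcb : closure b ⊆ Kx :=
              (closure_mono hbint).trans (closure_minimal interior_subset hKx.isClosed)
            exact ⟨b, hbB, hxb, hKx.of_isClosed_subset isClosed_closure hcb, hcb.trans hKxF⟩
          choose! bf hbfB hxbf hbfc hbfF using hpt
          obtain ⟨τ, hτ⟩ := hK.elim_finite_subcover (fun x : {x : ℝ × L // x ∈ K} => bf x.1)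
            (fun x => TopologicalSpace.isOpen_of_mem_countableBasis (hbfB x.1 x.2))
            (fun x hx => Set.mem_iUnion.2 ⟨⟨x, hx⟩, hxbf x hx⟩)
          set I : Set (Set (ℝ × L)) := (fun x : {x : ℝ × L // x ∈ K} => bf x.1) '' ↑τ with hI
          have hIfin : I.Finite := τ.finite_toSet.image _
          have hIB : I ⊆ B := by rintro b ⟨x, hx, rfl⟩; exact hbfB x.1 x.2
          have hIc : ∀ b ∈ I, IsCompact (closure b) := by
            rintro b ⟨x, hx, rfl⟩; exact hbfc x.1 x.2
          have hKI : K ⊆ ⋃ b ∈ I, closure b := by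
            intro x hx
            obtain ⟨i, hiτ, hxi⟩ := Set.mem_iUnion₂.1 (hτ hx)
            exact Set.mem_iUnion₂.2 ⟨bf i.1, ⟨i, hiτ, rfl⟩, subset_closure hxi⟩
          refine ⟨_, ⟨I, ⟨⟨⟨hIfin, hIB⟩, hIc⟩, hKI⟩, rfl⟩, ?_⟩
          show F.1 ∩ ((⋃ b ∈ I, closure b) ∩ strip L t) = ∅
          rw [Set.eq_empty_iff_forall_notMem]
          rintro p ⟨hpF, hpD, -⟩
          obtain ⟨b, ⟨x, hxτ, rfl⟩, hpb⟩ := Set.mem_iUnion₂.1 hpD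
          exact (hbfF x.1 x.2 hpb) hpF
        · rintro ⟨T, ⟨I, ⟨⟨⟨hIf, hIB⟩, hIc⟩, hKI⟩, rfl⟩, hFT⟩
          show F.1 ∩ K = ∅
          have hFT' : F.1 ∩ ((⋃ b ∈ I, closure b) ∩ strip L t) = ∅ := hFT
          rw [Set.eq_empty_iff_forall_notMem] at hFT' ⊢
          intro p hp
          exact hFT' p ⟨hp.1, ⟨hKI hp.2, hKs hp.2⟩⟩
      rw [key]
      refine TopologicalSpace.GenerateOpen.sUnion _ ?_
      rintro T ⟨I, hI, rfl⟩
      exact TopologicalSpace.GenerateOpen.basic _ (Or.inr ⟨I, hI.1, rfl⟩)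
  have htop : fellTop L t = TopologicalSpace.generateFrom SC := by
    refine le_antisymm (TopologicalSpace.generateFrom_anti hSCsub) ?_
    exact @le_generateFrom (Cl L t) (TopologicalSpace.generateFrom SC) (fellSub L t) hopen
  haveI : SecondCountableTopology (Cl L t) := ⟨⟨SC, hSCcnt, htop⟩⟩
  have hb : borel (Cl L t) = MeasurableSpace.generateFrom SC :=
    borel_eq_generateFrom_of_subbasis htop
  exact le_trans (le_of_eq hb) (MeasurableSpace.generateFrom_mono hSCsub)

end Aux


section Aux2

lemma mem_subshift_image {a : ℝ} {A : Set (ℝ × L)} {x : ℝ} {ℓ : L} :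
    (x, ℓ) ∈ (fun p : ℝ × L => (p.1 - a, p.2)) '' A ↔ (x + a, ℓ) ∈ A := by
  constructor
  · rintro ⟨⟨y, m⟩, hy, h⟩
    obtain ⟨h1, h2⟩ := Prod.mk.injEq _ _ _ _ ▸ h
    subst h2
    have : y = x + a := by dsimp at h1; linarith
    subst this; exact hy
  · intro h
    exact ⟨(x + a, ℓ), h, by simp⟩

lemma mem_addshift_image {a : ℝ} {A : Set (ℝ × L)} {x : ℝ} {ℓ : L} :
    (x, ℓ) ∈ (fun p : ℝ × L => (p.1 + a, p.2)) '' A ↔ (x - a, ℓ) ∈ A := by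
  constructor
  · rintro ⟨⟨y, m⟩, hy, h⟩
    obtain ⟨h1, h2⟩ := Prod.mk.injEq _ _ _ _ ▸ h
    subst h2
    have : y = x - a := by dsimp at h1; linarith
    subst this; exact hy
  · intro h
    exact ⟨(x - a, ℓ), h, by simp⟩

/-- Measurability criterion for maps into `Cl L u`. -/
lemma measurable_toCl [SecondCountableTopology L] [LocallyCompactSpace L] [T2Space L]
    {X : Type*} [MeasurableSpace X] {u : ℝ} {f : X → Cl L u}
    (h : ∀ S ∈ fellSub L u, MeasurableSet (f ⁻¹' S)) : Measurable f :=
  (measurable_generateFrom h).mono le_rfl (borel_le_generate u)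

/-- The general restriction–translate map `Cl L w → Cl L u` over the window `[a, a+u]`. -/
noncomputable def restr (a u w : ℝ) (Z : Cl L w) : Cl L u :=
  ⟨(fun p : ℝ × L => (p.1 - a, p.2)) '' (Z.1 ∩ (Set.Icc a (a + u) ×ˢ (Set.univ : Set L))), by
    constructor
    · exact isClosed_fstImage (· - a) (· + a) (by fun_prop)
        (fun x => by ring) (fun x => by ring)
        (Z.2.1.inter (isClosed_Icc.prod isClosed_univ))
    · rintro p ⟨q, ⟨-, hq⟩, rfl⟩
      simp only [Set.mem_prod, Set.mem_Icc, Set.mem_univ, and_true] at hq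
      simp only [strip, Set.mem_prod, Set.mem_Icc, Set.mem_univ, and_true]
      constructor <;> linarith [hq.1, hq.2]⟩

lemma restrictTranslate_eq_restr (s t : ℝ) :
    (restrictTranslate s t : Cl L 1 → Cl L (t - s)) = restr s (t - s) 1 := by
  funext Z
  apply Subtype.ext
  show (fun p : ℝ × L => (p.1 - s, p.2)) '' (Z.1 ∩ (Set.Icc s t ×ˢ (Set.univ : Set L)))
      = (fun p : ℝ × L => (p.1 - s, p.2)) '' (Z.1 ∩ (Set.Icc s (s + (t - s)) ×ˢ (Set.univ : Set L)))
  rw [show s + (t - s) = t by ring]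

lemma measurable_restr [SecondCountableTopology L] [LocallyCompactSpace L] [T2Space L]
    {a u w : ℝ} (ha : 0 ≤ a) (hu : 0 < u) (huw : a + u ≤ w) :
    Measurable (restr a u w : Cl L w → Cl L u) := by
  apply measurable_toCl
  rintro S (⟨U, hU, rfl⟩ | ⟨K, hK, hKs, rfl⟩)
  · have key : (restr a u w : Cl L w → Cl L u) ⁻¹'
        {F : Cl L u | (F.1 ∩ (U ∩ strip L u)).Nonempty}
        = {F : Cl L w | (F.1 ∩ (((fun p : ℝ × L => (p.1 - a, p.2)) ⁻¹' U)
            ∩ (Set.Icc a (a + u) ×ˢ (Set.univ : Set L)))).Nonempty} := by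
      ext Z
      simp only [Set.mem_preimage, Set.mem_setOf_eq]
      constructor
      · rintro ⟨⟨x, ℓ⟩, hmem, hU', hs'⟩
        rw [show (restr a u w Z).1 = (fun p : ℝ × L => (p.1 - a, p.2)) ''
            (Z.1 ∩ (Set.Icc a (a + u) ×ˢ (Set.univ : Set L))) from rfl,
          mem_subshift_image] at hmem
        refine ⟨(x + a, ℓ), hmem.1, ?_, hmem.2⟩
        show (x + a - a, ℓ) ∈ U
        rw [show x + a - a = x by ring]
        exact hU'
      · rintro ⟨⟨y, m⟩, hy, hU', hband⟩
        simp only [Set.mem_prod, Set.mem_Icc, Set.mem_univ, and_true] at hband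
        refine ⟨(y - a, m), ?_, hU', ?_⟩
        · rw [show (restr a u w Z).1 = (fun p : ℝ × L => (p.1 - a, p.2)) ''
              (Z.1 ∩ (Set.Icc a (a + u) ×ˢ (Set.univ : Set L))) from rfl,
            mem_subshift_image, show y - a + a = y by ring]
          exact ⟨hy, by simp only [Set.mem_prod, Set.mem_Icc, Set.mem_univ, and_true]; exact hband⟩
        · simp only [strip, Set.mem_prod, Set.mem_Icc, Set.mem_univ, and_true]
          constructor <;> linarith [hband.1, hband.2]
    rw [key]
    exact measurableSet_hitSet_inter (hU.preimage (by fun_prop))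
      (isClosed_Icc.prod isClosed_univ)
      (fun p hp => by
        simp only [Set.mem_prod, Set.mem_Icc, Set.mem_univ, and_true] at hp
        simp only [strip, Set.mem_prod, Set.mem_Icc, Set.mem_univ, and_true]
        constructor <;> linarith [hp.1, hp.2])
  · have key : (restr a u w : Cl L w → Cl L u) ⁻¹' {F : Cl L u | F.1 ∩ K = ∅}
        = {F : Cl L w | F.1 ∩ ((fun p : ℝ × L => (p.1 + a, p.2)) '' K) = ∅} := by
      ext Z
      simp only [Set.mem_preimage, Set.mem_setOf_eq]
      rw [Set.eq_empty_iff_forall_notMem, Set.eq_empty_iff_forall_notMem]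
      constructor
      · rintro h ⟨y, m⟩ ⟨hy, hyK⟩
        rw [mem_addshift_image] at hyK
        have hys : (y - a, m) ∈ strip L u := hKs hyK
        simp only [strip, Set.mem_prod, Set.mem_Icc, Set.mem_univ, and_true] at hys
        refine h (y - a, m) ⟨?_, hyK⟩
        rw [show (restr a u w Z).1 = (fun p : ℝ × L => (p.1 - a, p.2)) ''
            (Z.1 ∩ (Set.Icc a (a + u) ×ˢ (Set.univ : Set L))) from rfl,
          mem_subshift_image, show y - a + a = y by ring]
        exact ⟨hy, by
          simp only [Set.mem_prod, Set.mem_Icc, Set.mem_univ, and_true]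
          constructor <;> linarith [hys.1, hys.2]⟩
      · rintro h ⟨x, ℓ⟩ ⟨hmem, hxK⟩
        rw [show (restr a u w Z).1 = (fun p : ℝ × L => (p.1 - a, p.2)) ''
            (Z.1 ∩ (Set.Icc a (a + u) ×ˢ (Set.univ : Set L))) from rfl,
          mem_subshift_image] at hmem
        refine h (x + a, ℓ) ⟨hmem.1, ?_⟩
        rw [mem_addshift_image, show x + a - a = x by ring]
        exact hxK
    rw [key]
    refine (isOpen_missSet (hK.image (by fun_prop)) ?_).measurableSet
    rintro p ⟨⟨y, m⟩, hy, rfl⟩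
    have := hKs hy
    simp only [strip, Set.mem_prod, Set.mem_Icc, Set.mem_univ, and_true] at this ⊢
    constructor <;> linarith [this.1, this.2]

end Aux2


section Aux3

/-- Transport along an equality of time horizons. -/
noncomputable def castCl {a b : ℝ} (h : a = b) (Z : Cl L a) : Cl L b := ⟨Z.1, Z.2.1, h ▸ Z.2.2⟩

@[simp] lemma castCl_coe {a b : ℝ} (h : a = b) (Z : Cl L a) : (castCl h Z).1 = Z.1 := rfl

lemma castCl_rfl_eq_id {a : ℝ} : (castCl (rfl : a = a) : Cl L a → Cl L a) = id := by
  funext Z; rfl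

lemma measurable_castCl {a b : ℝ} (h : a = b) : Measurable (castCl (L := L) h) := by
  subst h; rw [castCl_rfl_eq_id]; exact measurable_id

lemma map_castCl {a b : ℝ} (h : a = b) (μ : (r : ℝ) → Measure (Cl L r)) :
    (μ a).map (castCl h) = μ b := by
  subst h; rw [castCl_rfl_eq_id, Measure.map_id]

/-- A.e., a realization of `μ a` misses the time slice `{r} × L`. -/
lemma ae_slice_empty {μ : (r : ℝ) → Measure (Cl L r)} (hμ : IsFactorizing μ)
    {a : ℝ} (ha : 0 < a) {r : ℝ} (hr : r ∈ Set.Icc (0:ℝ) a) :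
    ∀ᵐ Z ∂(μ a), Z.1 ∩ ({r} ×ˢ (Set.univ : Set L)) = ∅ := by
  have h0 := hμ.2.2 a ha r hr
  rw [ae_iff]
  refine measure_mono_null ?_ h0
  intro Z hZ
  simp only [Set.mem_setOf_eq] at hZ ⊢
  rw [← Ne, ← Set.nonempty_iff_ne_empty] at hZ
  obtain ⟨⟨x, ℓ⟩, hmem, hx⟩ := hZ
  simp only [Set.mem_prod, Set.mem_singleton_iff, Set.mem_univ, and_true] at hx
  subst hx
  exact ⟨ℓ, hmem⟩

lemma ae_fst_slice {μ : (r : ℝ) → Measure (Cl L r)} (hμ : IsFactorizing μ)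
    {a b : ℝ} (ha : 0 < a) (hb : 0 < b) {r : ℝ} (hr : r ∈ Set.Icc (0:ℝ) a) :
    ∀ᵐ p ∂((μ a).prod (μ b)), p.1.1 ∩ ({r} ×ˢ (Set.univ : Set L)) = ∅ := by
  haveI := hμ.1 a ha; haveI := hμ.1 b hb
  have h := ae_slice_empty hμ ha hr
  rw [ae_iff] at h ⊢
  obtain ⟨B, hsub, hBm, hB0⟩ := exists_measurable_superset_of_null h
  have hBprod : ((μ a).prod (μ b)) (B ×ˢ (Set.univ : Set (Cl L b))) = 0 := by
    rw [Measure.prod_prod, hB0, zero_mul]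
  have hss : {p : Cl L a × Cl L b | ¬ p.1.1 ∩ ({r} ×ˢ (Set.univ : Set L)) = ∅}
      ⊆ B ×ˢ (Set.univ : Set (Cl L b)) :=
    fun p hp => Set.mem_prod.2 ⟨hsub hp, Set.mem_univ _⟩
  exact measure_mono_null hss hBprod

lemma ae_snd_slice {μ : (r : ℝ) → Measure (Cl L r)} (hμ : IsFactorizing μ)
    {a b : ℝ} (ha : 0 < a) (hb : 0 < b) {r : ℝ} (hr : r ∈ Set.Icc (0:ℝ) b) :
    ∀ᵐ p ∂((μ a).prod (μ b)), p.2.1 ∩ ({r} ×ˢ (Set.univ : Set L)) = ∅ := by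
  haveI := hμ.1 a ha; haveI := hμ.1 b hb
  have h := ae_slice_empty hμ hb hr
  rw [ae_iff] at h ⊢
  obtain ⟨B, hsub, hBm, hB0⟩ := exists_measurable_superset_of_null h
  have hBprod : ((μ a).prod (μ b)) ((Set.univ : Set (Cl L a)) ×ˢ B) = 0 := by
    rw [Measure.prod_prod, hB0, mul_zero]
  have hss : {p : Cl L a × Cl L b | ¬ p.2.1 ∩ ({r} ×ˢ (Set.univ : Set L)) = ∅}
      ⊆ (Set.univ : Set (Cl L a)) ×ˢ B :=
    fun p hp => Set.mem_prod.2 ⟨Set.mem_univ _, hsub hp⟩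
  exact measure_mono_null hss hBprod

/-- Core transfer lemma. -/
lemma core {a b d : ℝ} {μ : (r : ℝ) → Measure (Cl L r)} (hμ : IsFactorizing μ)
    (ha : 0 < a) (hb : 0 < b)
    {f : Cl L (a + b) → Cl L d} (hf : Measurable f)
    {g : Cl L a × Cl L b → Cl L d} (hg : Measurable g)
    (hae : ∀ᵐ p ∂((μ a).prod (μ b)), f (concatMap a b p) = g p) :
    (μ (a + b)).map f ≪ ((μ a).prod (μ b)).map g ∧
      ((μ a).prod (μ b)).map g ≪ (μ (a + b)).map f := by
  haveI := hμ.1 a ha; haveI := hμ.1 b hb; haveI := hμ.1 _ (add_pos ha hb)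
  obtain ⟨h1, h2⟩ := hμ.2.1 a b ha hb
  set P := (μ a).prod (μ b) with hP
  have hcm : AEMeasurable (concatMap a b) P := by
    by_contra hc
    rw [Measure.map_of_not_aemeasurable hc] at h1
    have h0 : μ (a + b) Set.univ = 0 := h1 rfl
    simp [measure_univ] at h0
  have hmap : (P.map (concatMap a b)).map f = P.map g := by
    rw [AEMeasurable.map_map_of_aemeasurable hf.aemeasurable hcm]
    exact Measure.map_congr hae
  constructor
  · rw [← hmap]; exact h1.map hf
  · rw [← hmap]; exact h2.map hf

end Aux3


section Aux4

lemma mem_strip {X x : ℝ} {ℓ : L} : (x, ℓ) ∈ strip L X ↔ 0 ≤ x ∧ x ≤ X := by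
  simp [strip]

lemma mem_band {a b x : ℝ} {ℓ : L} :
    (x, ℓ) ∈ Set.Icc a b ×ˢ (Set.univ : Set L) ↔ a ≤ x ∧ x ≤ b := by
  simp [Set.mem_Icc]

lemma slice_notMem {A : Set (ℝ × L)} {r : ℝ}
    (h : A ∩ ({r} ×ˢ (Set.univ : Set L)) = ∅) (ℓ : L) : (r, ℓ) ∉ A :=
  fun hm => (Set.eq_empty_iff_forall_notMem.1 h (r, ℓ)) ⟨hm, by simp⟩

end Aux4


/-- Lemma 2.4: for a factorizing family `μ` over `[0,1] × L` and
`0 ≤ s < t ≤ 1`, the pushforward `(R_{s,t})_* μ_1` and `μ_{t-s}` are mutually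
absolutely continuous. -/
theorem restrictTranslate_pushforward_equiv
    [SecondCountableTopology L] [LocallyCompactSpace L] [T2Space L]
    (μ : (t : ℝ) → Measure (Cl L t)) (hμ : IsFactorizing μ)
    (s t : ℝ) (hs : 0 ≤ s) (hst : s < t) (ht : t ≤ 1) :
    Measure.map (restrictTranslate s t) (μ 1) ≪ μ (t - s) ∧
    μ (t - s) ≪ Measure.map (restrictTranslate s t) (μ 1) := by
  rcases hs.eq_or_lt with hs0 | hs0
  · -- s = 0
    subst hs0
    rcases eq_or_lt_of_le ht with ht1 | ht1
    · -- t = 1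
      subst ht1
      have hR : (restrictTranslate (0:ℝ) 1 : Cl L 1 → Cl L (1 - 0))
          = castCl (show (1:ℝ) = 1 - 0 by norm_num) := by
        funext Z
        apply Subtype.ext
        show (fun p : ℝ × L => (p.1 - 0, p.2)) ''
            (Z.1 ∩ (Set.Icc (0:ℝ) 1 ×ˢ (Set.univ : Set L))) = Z.1
        ext ⟨x, ℓ⟩
        rw [mem_subshift_image, add_zero]
        constructor
        · exact fun h => h.1
        · intro h
          refine ⟨h, mem_band.2 ?_⟩
          exact mem_strip.1 (Z.2.2 h)
      rw [hR, map_castCl (show (1:ℝ) = 1 - 0 by norm_num) μ]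
      exact ⟨Measure.AbsolutelyContinuous.rfl, Measure.AbsolutelyContinuous.rfl⟩
    · -- t < 1
      have h1 : t + (1 - t) = 1 := by ring
      have h2 : t = t - 0 := by ring
      have hv : (0:ℝ) < 1 - t := by linarith
      haveI := hμ.1 t hst
      haveI := hμ.1 _ hv
      have hRm : Measurable (restrictTranslate 0 t : Cl L 1 → Cl L (t - 0)) := by
        rw [restrictTranslate_eq_restr]
        exact measurable_restr le_rfl (by linarith) (by linarith)
      have hfm : Measurable
          ((restrictTranslate 0 t : Cl L 1 → Cl L (t - 0)) ∘ castCl h1) :=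
        hRm.comp (measurable_castCl h1)
      have hgm : Measurable ((castCl h2 : Cl L t → Cl L (t - 0)) ∘
          (Prod.fst : Cl L t × Cl L (1 - t) → Cl L t)) :=
        (measurable_castCl h2).comp measurable_fst
      have hae : ∀ᵐ p ∂((μ t).prod (μ (1 - t))),
          ((restrictTranslate 0 t : Cl L 1 → Cl L (t - 0)) ∘ castCl h1)
              (concatMap t (1 - t) p)
            = ((castCl h2 : Cl L t → Cl L (t - 0)) ∘ Prod.fst) p := by
        filter_upwards [ae_snd_slice hμ hst hv (Set.mem_Icc.2 ⟨le_rfl, le_of_lt hv⟩)]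
          with p hp
        apply Subtype.ext
        show (fun q : ℝ × L => (q.1 - 0, q.2)) ''
            (((p.1.1 ∪ (fun q : ℝ × L => (q.1 + t, q.2)) '' p.2.1)
                ∩ strip L (t + (1 - t)))
              ∩ (Set.Icc (0:ℝ) t ×ˢ (Set.univ : Set L))) = p.1.1
        ext ⟨x, ℓ⟩
        rw [mem_subshift_image, add_zero]
        constructor
        · rintro ⟨⟨hmem, hstr⟩, hband⟩
          rcases hmem with h | h
          · exact h
          · exfalso
            rw [mem_addshift_image] at h
            have h3 := mem_strip.1 (p.2.2.2 h)
            have h4 := mem_band.1 hband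
            have hx : x - t = 0 := by linarith [h3.1, h4.2]
            rw [hx] at h
            exact slice_notMem hp ℓ h
        · intro h
          have h3 := mem_strip.1 (p.1.2.2 h)
          exact ⟨⟨Or.inl h, mem_strip.2 ⟨h3.1, by linarith [h3.2]⟩⟩,
            mem_band.2 ⟨h3.1, h3.2⟩⟩
      obtain ⟨c1, c2⟩ := core hμ hst hv hfm hgm hae
      have e1 : (μ (t + (1 - t))).map
            ((restrictTranslate 0 t : Cl L 1 → Cl L (t - 0)) ∘ castCl h1)
          = (μ 1).map (restrictTranslate 0 t) := by
        rw [← Measure.map_map hRm (measurable_castCl h1), map_castCl h1 μ]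
      have e2 : (((μ t).prod (μ (1 - t))).map
            ((castCl h2 : Cl L t → Cl L (t - 0)) ∘ Prod.fst)) = μ (t - 0) := by
        rw [← Measure.map_map (measurable_castCl h2) measurable_fst,
          Measure.map_fst_prod, measure_univ, one_smul, map_castCl h2 μ]
      rw [e1, e2] at c1 c2
      exact ⟨c1, c2⟩
  · rcases eq_or_lt_of_le ht with ht1 | ht1
    · -- s > 0, t = 1
      subst ht1
      have h1 : s + (1 - s) = 1 := by ring
      have hu : (0:ℝ) < 1 - s := by linarith
      haveI := hμ.1 s hs0
      haveI := hμ.1 _ hu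
      have hRm : Measurable (restrictTranslate s 1 : Cl L 1 → Cl L (1 - s)) := by
        rw [restrictTranslate_eq_restr]
        exact measurable_restr hs hu (by linarith)
      have hfm : Measurable
          ((restrictTranslate s 1 : Cl L 1 → Cl L (1 - s)) ∘ castCl h1) :=
        hRm.comp (measurable_castCl h1)
      have hae : ∀ᵐ p ∂((μ s).prod (μ (1 - s))),
          ((restrictTranslate s 1 : Cl L 1 → Cl L (1 - s)) ∘ castCl h1)
              (concatMap s (1 - s) p)
            = (Prod.snd : Cl L s × Cl L (1 - s) → Cl L (1 - s)) p := by
        filter_upwards [ae_fst_slice hμ hs0 hu (Set.mem_Icc.2 ⟨hs, le_rfl⟩)] with p hp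
        apply Subtype.ext
        show (fun q : ℝ × L => (q.1 - s, q.2)) ''
            (((p.1.1 ∪ (fun q : ℝ × L => (q.1 + s, q.2)) '' p.2.1)
                ∩ strip L (s + (1 - s)))
              ∩ (Set.Icc s 1 ×ˢ (Set.univ : Set L))) = p.2.1
        ext ⟨x, ℓ⟩
        rw [mem_subshift_image]
        constructor
        · rintro ⟨⟨hmem, hstr⟩, hband⟩
          rcases hmem with h | h
          · exfalso
            have h3 := mem_strip.1 (p.1.2.2 h)
            have h4 := mem_band.1 hband
            have hx : x + s = s := by linarith [h3.2, h4.1]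
            rw [hx] at h
            exact slice_notMem hp ℓ h
          · rw [mem_addshift_image, show x + s - s = x by ring] at h
            exact h
        · intro h
          have h3 := mem_strip.1 (p.2.2.2 h)
          refine ⟨⟨Or.inr ?_, mem_strip.2 ⟨by linarith [h3.1], by linarith [h3.2]⟩⟩,
            mem_band.2 ⟨by linarith [h3.1], by linarith [h3.2]⟩⟩
          rw [mem_addshift_image, show x + s - s = x by ring]
          exact h
      obtain ⟨c1, c2⟩ := core hμ hs0 hu hfm measurable_snd hae
      have e1 : (μ (s + (1 - s))).map
            ((restrictTranslate s 1 : Cl L 1 → Cl L (1 - s)) ∘ castCl h1)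
          = (μ 1).map (restrictTranslate s 1) := by
        rw [← Measure.map_map hRm (measurable_castCl h1), map_castCl h1 μ]
      have e2 : (((μ s).prod (μ (1 - s))).map
            (Prod.snd : Cl L s × Cl L (1 - s) → Cl L (1 - s))) = μ (1 - s) := by
        rw [Measure.map_snd_prod, measure_univ, one_smul]
      rw [e1, e2] at c1 c2
      exact ⟨c1, c2⟩
    · -- 0 < s, t < 1
      have h1 : s + ((t - s) + (1 - t)) = 1 := by ring
      have hu : (0:ℝ) < t - s := by linarith
      have hv : (0:ℝ) < 1 - t := by linarith
      have hw : (0:ℝ) < (t - s) + (1 - t) := by linarith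
      haveI := hμ.1 s hs0
      haveI := hμ.1 _ hu
      haveI := hμ.1 _ hv
      haveI := hμ.1 _ hw
      have hRm : Measurable (restrictTranslate s t : Cl L 1 → Cl L (t - s)) := by
        rw [restrictTranslate_eq_restr]
        exact measurable_restr hs hu (by linarith)
      have hr0m : Measurable
          (restr 0 (t - s) ((t - s) + (1 - t)) :
            Cl L ((t - s) + (1 - t)) → Cl L (t - s)) :=
        measurable_restr le_rfl hu (by linarith)
      have hfm : Measurable
          ((restrictTranslate s t : Cl L 1 → Cl L (t - s)) ∘ castCl h1) :=
        hRm.comp (measurable_castCl h1)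
      -- step 1
      have hae1 : ∀ᵐ p ∂((μ s).prod (μ ((t - s) + (1 - t)))),
          ((restrictTranslate s t : Cl L 1 → Cl L (t - s)) ∘ castCl h1)
              (concatMap s ((t - s) + (1 - t)) p)
            = ((restr 0 (t - s) ((t - s) + (1 - t)) :
                Cl L ((t - s) + (1 - t)) → Cl L (t - s)) ∘ Prod.snd) p := by
        filter_upwards [ae_fst_slice hμ hs0 hw (Set.mem_Icc.2 ⟨hs, le_rfl⟩)] with p hp
        apply Subtype.ext
        show (fun q : ℝ × L => (q.1 - s, q.2)) ''
            (((p.1.1 ∪ (fun q : ℝ × L => (q.1 + s, q.2)) '' p.2.1)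
                ∩ strip L (s + ((t - s) + (1 - t))))
              ∩ (Set.Icc s t ×ˢ (Set.univ : Set L)))
          = (fun q : ℝ × L => (q.1 - 0, q.2)) ''
            (p.2.1 ∩ (Set.Icc (0:ℝ) (0 + (t - s)) ×ˢ (Set.univ : Set L)))
        ext ⟨x, ℓ⟩
        rw [mem_subshift_image, mem_subshift_image, add_zero]
        constructor
        · rintro ⟨⟨hmem, hstr⟩, hband⟩
          have h4 := mem_band.1 hband
          rcases hmem with h | h
          · exfalso
            have h3 := mem_strip.1 (p.1.2.2 h)
            have hx : x + s = s := by linarith [h3.2, h4.1]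
            rw [hx] at h
            exact slice_notMem hp ℓ h
          · rw [mem_addshift_image, show x + s - s = x by ring] at h
            exact ⟨h, mem_band.2 ⟨by linarith [h4.1], by linarith [h4.2]⟩⟩
        · rintro ⟨h, hband'⟩
          have h4 := mem_band.1 hband'
          refine ⟨⟨Or.inr ?_, mem_strip.2 ⟨by linarith [h4.1], by linarith [h4.2]⟩⟩,
            mem_band.2 ⟨by linarith [h4.1], by linarith [h4.2]⟩⟩
          rw [mem_addshift_image, show x + s - s = x by ring]
          exact h
      obtain ⟨c1, c2⟩ := core hμ hs0 hw hfm (hr0m.comp measurable_snd) hae1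
      have e1 : (μ (s + ((t - s) + (1 - t)))).map
            ((restrictTranslate s t : Cl L 1 → Cl L (t - s)) ∘ castCl h1)
          = (μ 1).map (restrictTranslate s t) := by
        rw [← Measure.map_map hRm (measurable_castCl h1), map_castCl h1 μ]
      have e2 : (((μ s).prod (μ ((t - s) + (1 - t)))).map
            ((restr 0 (t - s) ((t - s) + (1 - t)) :
                Cl L ((t - s) + (1 - t)) → Cl L (t - s)) ∘ Prod.snd))
          = (μ ((t - s) + (1 - t))).map (restr 0 (t - s) ((t - s) + (1 - t))) := by
        rw [← Measure.map_map hr0m measurable_snd, Measure.map_snd_prod,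
          measure_univ, one_smul]
      rw [e1, e2] at c1 c2
      -- step 2
      have hae2 : ∀ᵐ p ∂((μ (t - s)).prod (μ (1 - t))),
          (restr 0 (t - s) ((t - s) + (1 - t)) :
              Cl L ((t - s) + (1 - t)) → Cl L (t - s))
              (concatMap (t - s) (1 - t) p)
            = (Prod.fst : Cl L (t - s) × Cl L (1 - t) → Cl L (t - s)) p := by
        filter_upwards [ae_snd_slice hμ hu hv (Set.mem_Icc.2 ⟨le_rfl, le_of_lt hv⟩)]
          with p hp
        apply Subtype.ext
        show (fun q : ℝ × L => (q.1 - 0, q.2)) ''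
            (((p.1.1 ∪ (fun q : ℝ × L => (q.1 + (t - s), q.2)) '' p.2.1)
                ∩ strip L ((t - s) + (1 - t)))
              ∩ (Set.Icc (0:ℝ) (0 + (t - s)) ×ˢ (Set.univ : Set L))) = p.1.1
        ext ⟨x, ℓ⟩
        rw [mem_subshift_image, add_zero]
        constructor
        · rintro ⟨⟨hmem, hstr⟩, hband⟩
          rcases hmem with h | h
          · exact h
          · exfalso
            rw [mem_addshift_image] at h
            have h3 := mem_strip.1 (p.2.2.2 h)
            have h4 := mem_band.1 hband
            have hx : x - (t - s) = 0 := by linarith [h3.1, h4.2]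
            rw [hx] at h
            exact slice_notMem hp ℓ h
        · intro h
          have h3 := mem_strip.1 (p.1.2.2 h)
          exact ⟨⟨Or.inl h, mem_strip.2 ⟨h3.1, by linarith [h3.2]⟩⟩,
            mem_band.2 ⟨h3.1, by linarith [h3.2]⟩⟩
      obtain ⟨d1, d2⟩ := core hμ hu hv hr0m measurable_fst hae2
      have e3 : (((μ (t - s)).prod (μ (1 - t))).map
            (Prod.fst : Cl L (t - s) × Cl L (1 - t) → Cl L (t - s))) = μ (t - s) := by
        rw [Measure.map_fst_prod, measure_univ, one_smul]
      rw [e3] at d1 d2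
      exact ⟨c1.trans d1, d2.trans c2⟩


end RandomSets
end

section
/- Let (X,Σ) be a standard Borel space, T a standard Borel space, and 𝒜 ⊆ Σ a countable algebra generating Σ. Let t ↦ μ_t and t ↦ ν_t be families of finite measures on (X,Σ) such that t ↦ μ_t(A) and t ↦ ν_t(A) are Borel for every A ∈ 𝒜, and such that ν_t ≪ μ_t for every t ∈ T. Then there exists a Borel function h : T×X → [0,∞) such that for every t ∈ T, the function h(t,·) is a version of the Radon–Nikodym derivative dν_t/dμ_t, μ_t-almost everywhere on X. -/
open MeasureTheory
open scoped ENNReal NNReal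

/-- Lemma 3.1: let `(X,Σ)` and `T` be standard Borel spaces,
`𝒜 ⊆ Σ` a countable generating algebra, and `t ↦ μ_t`, `t ↦ ν_t` families of finite
measures on `X` with `t ↦ μ_t(A)`, `t ↦ ν_t(A)` Borel for every `A ∈ 𝒜` and
`ν_t ≪ μ_t` for all `t`.  Then there is a jointly Borel `h : T × X → [0,∞)` such
that for every `t`, `h(t,·)` is a version of the Radon–Nikodym derivative
`dν_t/dμ_t`, `μ_t`-a.e. -/
theorem exists_jointly_measurable_rnDeriv
    {X : Type*} [MeasurableSpace X] [StandardBorelSpace X]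
    {T : Type*} [MeasurableSpace T] [StandardBorelSpace T]
    (𝒜 : Set (Set X)) (hcount : 𝒜.Countable) (halg : MeasureTheory.IsSetAlgebra 𝒜)
    (hgen : MeasurableSpace.generateFrom 𝒜 = (inferInstance : MeasurableSpace X))
    (μ ν : T → Measure X)
    (hμfin : ∀ t, IsFiniteMeasure (μ t)) (hνfin : ∀ t, IsFiniteMeasure (ν t))
    (hμmeas : ∀ A ∈ 𝒜, Measurable fun t => μ t A)
    (hνmeas : ∀ A ∈ 𝒜, Measurable fun t => ν t A)
    (hac : ∀ t, ν t ≪ μ t) :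
    ∃ h : T → X → ℝ≥0, Measurable (Function.uncurry h) ∧
      ∀ t, (fun x => (h t x : ℝ≥0∞)) =ᵐ[μ t] (ν t).rnDeriv (μ t) := by
  classical
  have hpi : IsPiSystem 𝒜 := fun s hs u hu _ => halg.inter_mem hs hu
  -- extend set-wise measurability from 𝒜 to all measurable sets
  have key : ∀ (m : T → Measure X), (∀ t, IsFiniteMeasure (m t)) →
      (∀ A ∈ 𝒜, Measurable fun t => m t A) →
      ∀ ⦃s : Set X⦄, MeasurableSet s → Measurable fun t => m t s := by
    intro m hfin hmeas
    refine MeasurableSpace.induction_on_inter hgen.symm hpi ?_ hmeas ?_ ?_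
    · simp
    · intro s hs hms
      have huniv : Measurable fun t => m t Set.univ := hmeas _ halg.univ_mem
      have heq : (fun t => m t sᶜ) = fun t => m t Set.univ - m t s := by
        ext t
        haveI := hfin t
        rw [measure_compl hs (measure_ne_top _ _)]
      rw [heq]
      exact huniv.sub hms
    · intro f hdisj hf hfm
      have heq : (fun t => m t (⋃ i, f i)) = fun t => ∑' i, m t (f i) := by
        ext t; exact measure_iUnion hdisj hf
      rw [heq]
      exact Measurable.ennreal_tsum hfm
  have hμ' : ∀ ⦃s : Set X⦄, MeasurableSet s → Measurable fun t => μ t s :=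
    key μ hμfin hμmeas
  have hν' : ∀ ⦃s : Set X⦄, MeasurableSet s → Measurable fun t => ν t s :=
    key ν hνfin hνmeas
  set d : T → ℝ≥0∞ := fun t => μ t Set.univ with hd_def
  set c : T → ℝ≥0∞ := fun t => ν t Set.univ with hc_def
  have hd : Measurable d := hμ' MeasurableSet.univ
  have hc : Measurable c := hν' MeasurableSet.univ
  have hd_ne_top : ∀ t, d t ≠ ∞ := fun t => by
    haveI := hμfin t; exact measure_ne_top _ _
  have hc_ne_top : ∀ t, c t ≠ ∞ := fun t => by
    haveI := hνfin t; exact measure_ne_top _ _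
  -- normalized kernels
  have hηmeas : Measurable (fun t => (d t)⁻¹ • μ t) := by
    apply Measure.measurable_of_measurable_coe
    intro s hs
    simp_rw [Measure.smul_apply, smul_eq_mul]
    exact (hd.inv).mul (hμ' hs)
  have hκmeas : Measurable (fun t => (c t)⁻¹ • ν t) := by
    apply Measure.measurable_of_measurable_coe
    intro s hs
    simp_rw [Measure.smul_apply, smul_eq_mul]
    exact (hc.inv).mul (hν' hs)
  let η : ProbabilityTheory.Kernel T X := ⟨fun t => (d t)⁻¹ • μ t, hηmeas⟩
  let κ : ProbabilityTheory.Kernel T X := ⟨fun t => (c t)⁻¹ • ν t, hκmeas⟩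
  have hbound : ∀ (a : ℝ≥0∞), a ≠ ∞ → a⁻¹ * a ≤ 1 := by
    intro a ha
    rcases eq_or_ne a 0 with h0 | h0
    · simp [h0]
    · rw [ENNReal.inv_mul_cancel h0 ha]
  haveI : ProbabilityTheory.IsFiniteKernel η :=
    ⟨⟨1, ENNReal.one_lt_top, fun t => by
      simp only [η, ProbabilityTheory.Kernel.coe_mk, Measure.smul_apply, smul_eq_mul]
      exact hbound _ (hd_ne_top t)⟩⟩
  haveI : ProbabilityTheory.IsFiniteKernel κ :=
    ⟨⟨1, ENNReal.one_lt_top, fun t => by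
      simp only [κ, ProbabilityTheory.Kernel.coe_mk, Measure.smul_apply, smul_eq_mul]
      exact hbound _ (hc_ne_top t)⟩⟩
  refine ⟨fun t x => (c t * (d t)⁻¹ * ProbabilityTheory.Kernel.rnDeriv κ η t x).toNNReal,
    ?_, ?_⟩
  · apply Measurable.ennreal_toNNReal
    exact (((hc.comp measurable_fst).mul ((hd.inv).comp measurable_fst)).mul
      (ProbabilityTheory.Kernel.measurable_rnDeriv κ η))
  · intro t
    haveI := hμfin t
    haveI := hνfin t
    rcases eq_or_ne (d t) 0 with hd0 | hd0
    · -- μ t = 0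
      have hμ0 : μ t = 0 := Measure.measure_univ_eq_zero.mp hd0
      rw [hμ0, ae_zero]
      exact Filter.eventually_bot
    rcases eq_or_ne (c t) 0 with hc0 | hc0
    · -- ν t = 0
      have hν0 : ν t = 0 := Measure.measure_univ_eq_zero.mp hc0
      have h1 : (0 : Measure X).rnDeriv (μ t) =ᵐ[μ t] 0 := Measure.rnDeriv_zero _
      rw [hν0]
      refine Filter.EventuallyEq.trans ?_ h1.symm
      filter_upwards with x
      simp [hc0]
    -- main case: 0 < c t < ∞, 0 < d t < ∞
    have hae : ae (η t) = ae (μ t) := by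
      show ae ((d t)⁻¹ • μ t) = ae (μ t)
      exact Measure.ae_ennreal_smul_measure_eq (ENNReal.inv_ne_zero.mpr (hd_ne_top t)) (μ t)
    have h1 : ProbabilityTheory.Kernel.rnDeriv κ η t =ᵐ[μ t] (κ t).rnDeriv (η t) := by
      have := ProbabilityTheory.Kernel.rnDeriv_eq_rnDeriv_measure (κ := κ) (η := η) (a := t)
      rwa [hae] at this
    have hκt : κ t = (c t)⁻¹ • ν t := rfl
    have hηt : η t = (d t)⁻¹ • μ t := rfl
    haveI : IsFiniteMeasure ((d t)⁻¹ • μ t) := by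
      constructor
      simp only [Measure.smul_apply, smul_eq_mul]
      exact lt_of_le_of_lt (hbound _ (hd_ne_top t)) ENNReal.one_lt_top
    have h2 : (κ t).rnDeriv (η t) =ᵐ[μ t] (c t)⁻¹ • (ν t).rnDeriv (η t) := by
      rw [hκt]
      have := Measure.rnDeriv_smul_left_of_ne_top (ν t) (η t)
        (r := (c t)⁻¹) (ENNReal.inv_ne_top.mpr hc0)
      rwa [hae] at this
    have h3 : (ν t).rnDeriv (η t) =ᵐ[μ t] d t • (ν t).rnDeriv (μ t) := by
      rw [hηt]
      have := Measure.rnDeriv_smul_right_of_ne_top (ν t) (μ t)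
        (r := (d t)⁻¹) (ENNReal.inv_ne_zero.mpr (hd_ne_top t)) (ENNReal.inv_ne_top.mpr hd0)
      rwa [inv_inv] at this
    filter_upwards [h1, h2, h3, Measure.rnDeriv_lt_top (ν t) (μ t)] with x hx1 hx2 hx3 hx4
    have hxeq : c t * (d t)⁻¹ * ProbabilityTheory.Kernel.rnDeriv κ η t x
        = (ν t).rnDeriv (μ t) x := by
      rw [hx1, hx2]
      simp only [Pi.smul_apply, smul_eq_mul]
      rw [hx3]
      simp only [Pi.smul_apply, smul_eq_mul]
      calc c t * (d t)⁻¹ * ((c t)⁻¹ * (d t * (ν t).rnDeriv (μ t) x))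
          = (c t * (c t)⁻¹) * ((d t)⁻¹ * d t) * (ν t).rnDeriv (μ t) x := by ring
        _ = (ν t).rnDeriv (μ t) x := by
            rw [ENNReal.mul_inv_cancel hc0 (hc_ne_top t),
              ENNReal.inv_mul_cancel hd0 (hd_ne_top t)]
            ring
    rw [hxeq, ENNReal.coe_toNNReal hx4.ne]
end

section
/- Let (S,𝒮) be a standard Borel space and let ν, ν′ be finite measures on S with ν′ ≪ ν, and put f := dν′/dν. For a finite measure ρ on S, let Π_ρ denote the law of the Poisson point process on S with intensity ρ, realized as a random finite counting measure: the total number of points N is Poisson with mean ρ(S), and conditionally on N = n the n points are i.i.d. with law ρ/ρ(S) (when ρ(S) > 0; if ρ(S) = 0 then Π_ρ is the Dirac mass at the empty configuration). Then Π_{ν′} ≪ Π_ν, and for Π_ν-a.e. finite configuration ξ, dΠ_{ν′}/dΠ_ν(ξ) = exp(ν(S) − ν′(S)) · ∏_{x ∈ ξ} f(x), where the product is over the points of ξ counted with multiplicity and the empty product equals 1. If moreover ν and ν′ are mutually absolutely continuous then so are Π_ν and Π_{ν′}. -/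
open MeasureTheory
open scoped ENNReal NNReal

/-- The law of the Poisson point process with finite intensity measure `ρ` on a
standard Borel space `S`, realized as a random finite counting measure via the
mixed-binomial construction: the number of points `N` is Poisson with mean `ρ(S)`
and, conditionally on `N = n`, the `n` points are i.i.d. with law `ρ/ρ(S)`
(if `ρ(S) = 0` this is the Dirac mass at the empty configuration). -/
noncomputable def poissonPP {S : Type*} [MeasurableSpace S] (ρ : Measure S) :
    Measure (Measure S) :=
  Measure.sum fun n : ℕ =>
    (ENNReal.ofReal (Real.exp (-(ρ Set.univ).toReal)) * (ρ Set.univ) ^ n / n.factorial) •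
      Measure.map (fun x : Fin n → S => ∑ i, Measure.dirac (x i))
        (Measure.pi fun _ : Fin n => (ρ Set.univ)⁻¹ • ρ)

namespace PoissonPPAux

variable {S : Type*} [MeasurableSpace S]

/-- `e^{-a}` for `a : ℝ≥0∞`, with `e^{-∞} = 0`. -/
noncomputable def nExp (a : ℝ≥0∞) : ℝ≥0∞ :=
  if a = ∞ then 0 else ENNReal.ofReal (Real.exp (-a.toReal))

/-- `e^{a}` for `a : ℝ≥0∞`, with `e^{∞} = ∞`. -/
noncomputable def pExp (a : ℝ≥0∞) : ℝ≥0∞ :=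
  if a = ∞ then ∞ else ENNReal.ofReal (Real.exp a.toReal)

lemma measurable_nExp : Measurable nExp := by
  unfold nExp
  refine Measurable.ite ?_ measurable_const ?_
  · have : {a : ℝ≥0∞ | a = ∞} = {∞} := by ext a; simp
    rw [this]; exact measurableSet_singleton _
  · exact ENNReal.measurable_ofReal.comp (Real.measurable_exp.comp ENNReal.measurable_toReal.neg)

lemma measurable_pExp : Measurable pExp := by
  unfold pExp
  refine Measurable.ite ?_ measurable_const ?_
  · have : {a : ℝ≥0∞ | a = ∞} = {∞} := by ext a; simp
    rw [this]; exact measurableSet_singleton _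
  · exact ENNReal.measurable_ofReal.comp (Real.measurable_exp.comp ENNReal.measurable_toReal)

/-- auxiliary function whose `ξ`-integral gives `-log` of the `≤ 1` part of the product. -/
noncomputable def phiF (f : S → ℝ≥0∞) (y : S) : ℝ≥0∞ :=
  if f y = 0 then ∞ else ENNReal.ofReal (-Real.log (min (f y).toReal 1))

/-- auxiliary function whose `ξ`-integral gives `log` of the `≥ 1` part of the product. -/
noncomputable def psiF (f : S → ℝ≥0∞) (y : S) : ℝ≥0∞ :=
  if f y = ∞ then ∞ else ENNReal.ofReal (Real.log (max (f y).toReal 1))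

lemma measurable_phiF {f : S → ℝ≥0∞} (hf : Measurable f) : Measurable (phiF f) := by
  unfold phiF
  refine Measurable.ite (hf (measurableSet_singleton 0)) measurable_const ?_
  exact ENNReal.measurable_ofReal.comp
    ((Real.measurable_log.comp ((ENNReal.measurable_toReal.comp hf).min measurable_const)).neg)

lemma measurable_psiF {f : S → ℝ≥0∞} (hf : Measurable f) : Measurable (psiF f) := by
  unfold psiF
  refine Measurable.ite (hf (measurableSet_singleton ∞)) measurable_const ?_
  exact ENNReal.measurable_ofReal.comp
    (Real.measurable_log.comp ((ENNReal.measurable_toReal.comp hf).max measurable_const))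

/-- The candidate density of `Π_{ν'}` with respect to `Π_ν`. -/
noncomputable def gDen (ν ν' : Measure S) : Measure S → ℝ≥0∞ := fun ξ =>
  ENNReal.ofReal (Real.exp ((ν Set.univ).toReal - (ν' Set.univ).toReal)) *
    (nExp (∫⁻ y, phiF (ν'.rnDeriv ν) y ∂ξ) * pExp (∫⁻ y, psiF (ν'.rnDeriv ν) y ∂ξ))

lemma measurable_gDen (ν ν' : Measure S) : Measurable (gDen ν ν') := by
  have hf : Measurable (ν'.rnDeriv ν) := Measure.measurable_rnDeriv ν' ν
  exact ((measurable_nExp.comp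
      (Measure.measurable_lintegral (measurable_phiF hf))).mul
    (measurable_pExp.comp
      (Measure.measurable_lintegral (measurable_psiF hf)))).const_mul _

lemma measurable_T (n : ℕ) :
    Measurable (fun x : Fin n → S => ∑ i, Measure.dirac (x i)) := by
  apply Measure.measurable_of_measurable_coe
  intro s hs
  have h1 : (fun x : Fin n → S => (∑ i, Measure.dirac (x i)) s)
      = fun x : Fin n → S => ∑ i, s.indicator (1 : S → ℝ≥0∞) (x i) := by
    funext x
    rw [Measure.coe_finset_sum, Finset.sum_apply]
    exact Finset.sum_congr rfl fun i _ => Measure.dirac_apply' _ hs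
  rw [h1]
  exact Finset.measurable_sum _ fun i _ =>
    (measurable_one.indicator hs).comp (measurable_pi_apply i)

lemma normFinite (μ : Measure S) [IsFiniteMeasure μ] :
    IsFiniteMeasure ((μ Set.univ)⁻¹ • μ) := by
  constructor
  rw [Measure.smul_apply, smul_eq_mul]
  rcases eq_or_ne (μ Set.univ) 0 with h | h
  · simp [h]
  · rw [ENNReal.inv_mul_cancel h (measure_ne_top μ _)]
    exact ENNReal.one_lt_top

lemma pi_zero {n : ℕ} (hn : n ≠ 0) :
    Measure.pi (fun _ : Fin n => (0 : Measure S)) = 0 := by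
  rw [← Measure.measure_univ_eq_zero, Measure.pi_univ]
  exact Finset.prod_eq_zero (Finset.mem_univ ⟨0, Nat.pos_of_ne_zero hn⟩) rfl

lemma lintegral_pi_prod (μ : Measure S) [SigmaFinite μ] :
    ∀ (n : ℕ) (g : Fin n → S → ℝ≥0∞), (∀ i, Measurable (g i)) →
      ∫⁻ x, ∏ i, g i (x i) ∂(Measure.pi fun _ : Fin n => μ) = ∏ i, ∫⁻ y, g i y ∂μ := by
  intro n
  induction n with
  | zero =>
    intro g hg
    simp only [Finset.univ_eq_empty, Finset.prod_empty]
    rw [lintegral_one, Measure.pi_univ]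
    simp
  | succ n ih =>
    intro g hg
    have hmp := (measurePreserving_piFinSuccAbove (fun _ : Fin (n + 1) => μ) 0).symm
    have hF : Measurable fun x : Fin (n + 1) → S => ∏ i, g i (x i) :=
      Finset.measurable_prod _ fun i _ => (hg i).comp (measurable_pi_apply i)
    rw [← hmp.lintegral_comp hF]
    simp_rw [MeasurableEquiv.piFinSuccAbove_symm_apply, Fin.insertNthEquiv, Equiv.coe_fn_mk,
      Fin.insertNth_zero, Fin.prod_univ_succ]
    simp only [Fin.zero_succAbove, cast_eq, Fin.cons_zero, Fin.cons_succ]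
    have hlpm := lintegral_prod_mul (μ := μ) (ν := Measure.pi fun _ : Fin n => μ)
      (f := g 0) (g := fun y : Fin n → S => ∏ i, g i.succ (y i))
      (hg 0).aemeasurable
      (Finset.measurable_prod _ fun i _ =>
        ((hg i.succ).comp (measurable_pi_apply i))).aemeasurable
    rw [hlpm, ih (fun i => g i.succ) (fun i => hg i.succ)]

lemma pi_withDensity (n : ℕ) (μ : Measure S) [IsFiniteMeasure μ] {f : S → ℝ≥0∞}
    (hf : Measurable f) [IsFiniteMeasure (μ.withDensity f)] :
    Measure.pi (fun _ : Fin n => μ.withDensity f)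
      = (Measure.pi fun _ : Fin n => μ).withDensity fun x => ∏ i, f (x i) := by
  refine Measure.pi_eq fun s hs => ?_
  rw [withDensity_apply _ (MeasurableSet.univ_pi hs),
    ← lintegral_indicator (MeasurableSet.univ_pi hs)]
  have hind : ∀ x : Fin n → S, (Set.univ.pi s).indicator (fun x => ∏ i, f (x i)) x
      = ∏ i, (s i).indicator f (x i) := by
    intro x
    by_cases hx : x ∈ Set.univ.pi s
    · rw [Set.indicator_of_mem hx]
      exact Finset.prod_congr rfl fun i _ => (Set.indicator_of_mem (hx i trivial) f).symm
    · rw [Set.indicator_of_notMem hx]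
      have : ∃ i, x i ∉ s i := by
        by_contra h
        push_neg at h
        exact hx fun i _ => h i
      obtain ⟨i, hi⟩ := this
      exact (Finset.prod_eq_zero (Finset.mem_univ i) (Set.indicator_of_notMem hi f)).symm
  simp_rw [hind]
  rw [lintegral_pi_prod μ n _ fun i => hf.indicator (hs i)]
  exact Finset.prod_congr rfl fun i _ => by
    rw [withDensity_apply _ (hs i), ← lintegral_indicator (hs i)]

lemma pi_smul (n : ℕ) {c : ℝ≥0∞} (hc : c ≠ ∞) (μ : Measure S) [IsFiniteMeasure μ] :
    Measure.pi (fun _ : Fin n => c • μ) = c ^ n • Measure.pi (fun _ : Fin n => μ) := by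
  haveI : IsFiniteMeasure (c • μ) := by
    constructor
    rw [Measure.smul_apply, smul_eq_mul]
    exact ENNReal.mul_lt_top hc.lt_top (measure_lt_top μ _)
  refine Measure.pi_eq fun s hs => ?_
  rw [Measure.smul_apply, Measure.pi_pi, smul_eq_mul]
  simp_rw [Measure.smul_apply, smul_eq_mul]
  rw [Finset.prod_mul_distrib, Finset.prod_const, Finset.card_univ, Fintype.card_fin]

lemma map_withDensity {β : Type*} [MeasurableSpace β] {T : S → β} (hT : Measurable T)
    (μ : Measure S) {g : β → ℝ≥0∞} (hg : Measurable g) :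
    (Measure.map T μ).withDensity g = Measure.map T (μ.withDensity (g ∘ T)) := by
  ext s hs
  rw [withDensity_apply _ hs, Measure.map_apply hT hs, withDensity_apply _ (hT hs),
    setLIntegral_map hs hg hT]
  rfl

/-- The key pointwise computation:  at a configuration `∑ δ_{x i}` with all `f (x i) ≠ ∞`,
the two `exp`-integrals reconstruct the product `∏ f (x i)`. -/
lemma prod_repr {n : ℕ} {f : S → ℝ≥0∞} (hf : Measurable f) (x : Fin n → S)
    (hx : ∀ i, f (x i) ≠ ∞) :
    nExp (∫⁻ y, phiF f y ∂(∑ i, Measure.dirac (x i))) *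
      pExp (∫⁻ y, psiF f y ∂(∑ i, Measure.dirac (x i))) = ∏ i, f (x i) := by
  rw [lintegral_finset_sum_measure, lintegral_finset_sum_measure]
  simp_rw [lintegral_dirac' _ (measurable_phiF hf), lintegral_dirac' _ (measurable_psiF hf)]
  by_cases h0 : ∃ i, f (x i) = 0
  · obtain ⟨i, hi⟩ := h0
    have hA : ∑ j, phiF f (x j) = ∞ :=
      ENNReal.sum_eq_top.mpr ⟨i, Finset.mem_univ i, by simp [phiF, hi]⟩
    rw [hA, nExp, if_pos rfl, zero_mul]
    exact (Finset.prod_eq_zero (Finset.mem_univ i) hi).symm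
  · push_neg at h0
    have hrpos : ∀ i, 0 < (f (x i)).toReal := fun i => ENNReal.toReal_pos (h0 i) (hx i)
    have hphi : ∀ i : Fin n, phiF f (x i) = ENNReal.ofReal (-Real.log (min (f (x i)).toReal 1)) :=
      fun i => if_neg (h0 i)
    have hpsi : ∀ i : Fin n, psiF f (x i) = ENNReal.ofReal (Real.log (max (f (x i)).toReal 1)) :=
      fun i => if_neg (hx i)
    have hphin : ∀ i : Fin n, 0 ≤ -Real.log (min (f (x i)).toReal 1) := fun i =>
      neg_nonneg.mpr (Real.log_nonpos (le_min (hrpos i).le zero_le_one) (min_le_right _ _))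
    have hpsin : ∀ i : Fin n, 0 ≤ Real.log (max (f (x i)).toReal 1) := fun i =>
      Real.log_nonneg (le_max_right _ _)
    have hAne : (∑ j, phiF f (x j)) ≠ ∞ :=
      (ENNReal.sum_lt_top.mpr fun j _ => by rw [hphi j]; exact ENNReal.ofReal_lt_top).ne
    have hBne : (∑ j, psiF f (x j)) ≠ ∞ :=
      (ENNReal.sum_lt_top.mpr fun j _ => by rw [hpsi j]; exact ENNReal.ofReal_lt_top).ne
    rw [nExp, if_neg hAne, pExp, if_neg hBne, ← ENNReal.ofReal_mul (Real.exp_nonneg _),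
      ← Real.exp_add]
    have hA : (∑ j, phiF f (x j)).toReal = ∑ j, -Real.log (min (f (x j)).toReal 1) := by
      rw [ENNReal.toReal_sum fun j _ => by rw [hphi j]; exact ENNReal.ofReal_ne_top]
      exact Finset.sum_congr rfl fun j _ => by rw [hphi j, ENNReal.toReal_ofReal (hphin j)]
    have hB : (∑ j, psiF f (x j)).toReal = ∑ j, Real.log (max (f (x j)).toReal 1) := by
      rw [ENNReal.toReal_sum fun j _ => by rw [hpsi j]; exact ENNReal.ofReal_ne_top]
      exact Finset.sum_congr rfl fun j _ => by rw [hpsi j, ENNReal.toReal_ofReal (hpsin j)]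
    rw [hA, hB]
    have hexp : -∑ j, -Real.log (min (f (x j)).toReal 1)
        + ∑ j, Real.log (max (f (x j)).toReal 1) = ∑ j, Real.log (f (x j)).toReal := by
      rw [← Finset.sum_neg_distrib, ← Finset.sum_add_distrib]
      refine Finset.sum_congr rfl fun j _ => ?_
      rw [neg_neg, ← Real.log_mul (lt_min (hrpos j) one_pos).ne'
        (lt_of_lt_of_le one_pos (le_max_right _ _)).ne', min_mul_max, mul_one]
    rw [hexp, Real.exp_sum, ENNReal.ofReal_prod_of_nonneg fun j _ => (Real.exp_nonneg _)]
    exact Finset.prod_congr rfl fun j _ => by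
      rw [Real.exp_log (hrpos j), ENNReal.ofReal_toReal (hx j)]

/-- a.e. on the product space, all values `f (x i)` of the Radon-Nikodym
derivative are finite. -/
lemma ae_forall_ne_top (ν ν' : Measure S) [IsFiniteMeasure ν] [IsFiniteMeasure ν'] (n : ℕ) :
    ∀ᵐ x ∂(Measure.pi fun _ : Fin n => (ν Set.univ)⁻¹ • ν),
      ∀ i, ν'.rnDeriv ν (x i) ≠ ∞ := by
  haveI := normFinite ν
  have hN : ((ν Set.univ)⁻¹ • ν) {y | ν'.rnDeriv ν y = ∞} = 0 := by
    rw [Measure.smul_apply, smul_eq_mul]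
    have h2 := ae_iff.mp (Measure.rnDeriv_lt_top ν' ν)
    have he : {y | ν'.rnDeriv ν y = ∞} = {y | ¬ ν'.rnDeriv ν y < ∞} := by
      ext y; simp [not_lt, top_le_iff]
    rw [he, h2, mul_zero]
  rw [ae_iff]
  have hsub : {x : Fin n → S | ¬ ∀ i, ν'.rnDeriv ν (x i) ≠ ∞}
      ⊆ ⋃ i, Function.eval i ⁻¹' {y | ν'.rnDeriv ν y = ∞} := by
    intro x hx
    simp only [Set.mem_setOf_eq, not_forall, not_not] at hx
    obtain ⟨i, hi⟩ := hx
    exact Set.mem_iUnion.mpr ⟨i, hi⟩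
  refine measure_mono_null hsub (measure_iUnion_null fun i => ?_)
  rw [Set.eval_preimage, Measure.pi_pi]
  refine Finset.prod_eq_zero (Finset.mem_univ i) ?_
  rw [Function.update_self]
  exact hN

/-- The main scalar/measure bookkeeping identity for the `n`-th summand. -/
lemma scalar_pi_eq (ν ν' : Measure S) [IsFiniteMeasure ν] [IsFiniteMeasure ν']
    (hac : ν' ≪ ν) (n : ℕ) :
    (ENNReal.ofReal (Real.exp (-(ν Set.univ).toReal)) * (ν Set.univ) ^ n / n.factorial) •
      (ENNReal.ofReal (Real.exp ((ν Set.univ).toReal - (ν' Set.univ).toReal)) •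
        Measure.pi (fun _ : Fin n => (ν Set.univ)⁻¹ • ν'))
    = (ENNReal.ofReal (Real.exp (-(ν' Set.univ).toReal)) * (ν' Set.univ) ^ n / n.factorial) •
        Measure.pi (fun _ : Fin n => (ν' Set.univ)⁻¹ • ν') := by
  haveI := normFinite ν'
  rcases eq_or_ne (ν' Set.univ) 0 with hl' | hl'
  · have hn'0 : ν' = 0 := Measure.measure_univ_eq_zero.mp hl'
    rcases Nat.eq_zero_or_pos n with hn | hn
    · subst hn
      rw [hn'0, smul_zero, smul_zero, smul_smul]
      congr 1
      simp only [Measure.coe_zero, Pi.zero_apply, ENNReal.toReal_zero, neg_zero, sub_zero,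
        pow_zero, Nat.factorial_zero, Nat.cast_one, div_one, mul_one]
      rw [← ENNReal.ofReal_mul (Real.exp_nonneg _), ← Real.exp_add]
      norm_num
    · rw [hn'0, smul_zero, smul_zero, pi_zero hn.ne', smul_zero, smul_zero, smul_zero]
  · have hl : ν Set.univ ≠ 0 := fun h => hl' (hac h)
    have hsm : (ν Set.univ)⁻¹ • ν'
        = ((ν Set.univ)⁻¹ * ν' Set.univ) • ((ν' Set.univ)⁻¹ • ν') := by
      rw [smul_smul, mul_assoc, ENNReal.mul_inv_cancel hl' (measure_ne_top ν' _), mul_one]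
    rw [hsm, pi_smul n (ENNReal.mul_ne_top (ENNReal.inv_ne_top.mpr hl) (measure_ne_top ν' _)) _,
      smul_smul, smul_smul]
    congr 1
    have hn : (ν Set.univ) ≠ ∞ := measure_ne_top ν _
    have e1 : ENNReal.ofReal (Real.exp (-(ν Set.univ).toReal))
        * ENNReal.ofReal (Real.exp ((ν Set.univ).toReal - (ν' Set.univ).toReal))
        = ENNReal.ofReal (Real.exp (-(ν' Set.univ).toReal)) := by
      rw [← ENNReal.ofReal_mul (Real.exp_nonneg _), ← Real.exp_add]
      congr 1
      ring
    have e2 : (ν Set.univ) ^ n * ((ν Set.univ)⁻¹ * ν' Set.univ) ^ n = (ν' Set.univ) ^ n := by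
      rw [← mul_pow, ← mul_assoc, ENNReal.mul_inv_cancel hl hn, one_mul]
    calc ENNReal.ofReal (Real.exp (-(ν Set.univ).toReal)) * (ν Set.univ) ^ n / n.factorial
          * ENNReal.ofReal (Real.exp ((ν Set.univ).toReal - (ν' Set.univ).toReal))
          * ((ν Set.univ)⁻¹ * ν' Set.univ) ^ n
        = (ENNReal.ofReal (Real.exp (-(ν Set.univ).toReal))
            * ENNReal.ofReal (Real.exp ((ν Set.univ).toReal - (ν' Set.univ).toReal)))
          * ((ν Set.univ) ^ n * ((ν Set.univ)⁻¹ * ν' Set.univ) ^ n)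
          * (n.factorial : ℝ≥0∞)⁻¹ := by
          rw [div_eq_mul_inv]; ring
      _ = ENNReal.ofReal (Real.exp (-(ν' Set.univ).toReal)) * (ν' Set.univ) ^ n
            * (n.factorial : ℝ≥0∞)⁻¹ := by rw [e1, e2]
      _ = ENNReal.ofReal (Real.exp (-(ν' Set.univ).toReal)) * (ν' Set.univ) ^ n
            / n.factorial := by rw [div_eq_mul_inv]

/-- The central identity: `Π_{ν'}` has density `gDen ν ν'` with respect to `Π_ν`. -/
lemma poissonPP_eq (ν ν' : Measure S) [IsFiniteMeasure ν] [IsFiniteMeasure ν']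
    (hac : ν' ≪ ν) :
    poissonPP ν' = (poissonPP ν).withDensity (gDen ν ν') := by
  haveI := normFinite ν
  haveI := normFinite ν'
  have hf : Measurable (ν'.rnDeriv ν) := Measure.measurable_rnDeriv ν' ν
  simp only [poissonPP]
  rw [withDensity_sum]
  congr 1
  funext n
  rw [withDensity_smul_measure, map_withDensity (measurable_T n) _ (measurable_gDen ν ν')]
  have hprod : Measurable fun x : Fin n → S => ∏ i, ν'.rnDeriv ν (x i) :=
    Finset.measurable_prod _ fun i _ => hf.comp (measurable_pi_apply i)
  have hgT : (gDen ν ν' ∘ fun x : Fin n → S => ∑ i, Measure.dirac (x i))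
      =ᵐ[Measure.pi fun _ : Fin n => (ν Set.univ)⁻¹ • ν]
      (ENNReal.ofReal (Real.exp ((ν Set.univ).toReal - (ν' Set.univ).toReal))
        • fun x : Fin n → S => ∏ i, ν'.rnDeriv ν (x i)) := by
    filter_upwards [ae_forall_ne_top ν ν' n] with x hx
    simp only [Function.comp_apply, gDen, Pi.smul_apply, smul_eq_mul]
    rw [prod_repr hf x hx]
  rw [withDensity_congr_ae hgT, withDensity_smul _ hprod]
  have hwd : ((ν Set.univ)⁻¹ • ν).withDensity (ν'.rnDeriv ν) = (ν Set.univ)⁻¹ • ν' := by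
    rw [withDensity_smul_measure, Measure.withDensity_rnDeriv_eq ν' ν hac]
  haveI : IsFiniteMeasure (((ν Set.univ)⁻¹ • ν).withDensity (ν'.rnDeriv ν)) := by
    rw [hwd]
    constructor
    rw [Measure.smul_apply, smul_eq_mul]
    rcases eq_or_ne (ν Set.univ) 0 with h | h
    · rw [hac h, mul_zero]
      exact ENNReal.zero_lt_top
    · exact ENNReal.mul_lt_top (ENNReal.inv_ne_top.mpr h).lt_top (measure_lt_top ν' _)
  rw [← pi_withDensity n _ hf]
  simp only [hwd]
  have hmapped := congrArg
    (fun m : Measure (Fin n → S) =>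
      Measure.map (fun x : Fin n → S => ∑ i, Measure.dirac (x i)) m)
    (scalar_pi_eq ν ν' hac n)
  simp only [Measure.map_smul] at hmapped
  rw [Measure.map_smul]
  exact hmapped.symm

lemma poissonPP_isFiniteMeasure (ρ : Measure S) [IsFiniteMeasure ρ] :
    IsFiniteMeasure (poissonPP ρ) := by
  constructor
  haveI := normFinite ρ
  simp only [poissonPP]
  rw [Measure.sum_apply _ MeasurableSet.univ]
  have hmass : ∀ n : ℕ, Measure.map (fun x : Fin n → S => ∑ i, Measure.dirac (x i))
      (Measure.pi fun _ : Fin n => (ρ Set.univ)⁻¹ • ρ) Set.univ ≤ 1 := by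
    intro n
    rw [Measure.map_apply (measurable_T n) MeasurableSet.univ, Set.preimage_univ, Measure.pi_univ]
    refine Finset.prod_le_one (fun _ _ => zero_le) fun i _ => ?_
    rw [Measure.smul_apply, smul_eq_mul]
    rcases eq_or_ne (ρ Set.univ) 0 with h | h
    · simp [h]
    · rw [ENNReal.inv_mul_cancel h (measure_ne_top ρ _)]
  have hc : ∀ n : ℕ,
      ENNReal.ofReal (Real.exp (-(ρ Set.univ).toReal)) * (ρ Set.univ) ^ n / n.factorial
      = ENNReal.ofReal (Real.exp (-(ρ Set.univ).toReal)
          * ((ρ Set.univ).toReal ^ n / n.factorial)) := by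
    intro n
    rw [ENNReal.ofReal_mul (Real.exp_nonneg _), ENNReal.ofReal_div_of_pos (by positivity),
      ENNReal.ofReal_pow ENNReal.toReal_nonneg, ENNReal.ofReal_toReal (measure_ne_top ρ _),
      ENNReal.ofReal_natCast, mul_div_assoc]
  calc ∑' n : ℕ, ((ENNReal.ofReal (Real.exp (-(ρ Set.univ).toReal)) * (ρ Set.univ) ^ n
          / n.factorial) •
        Measure.map (fun x : Fin n → S => ∑ i, Measure.dirac (x i))
          (Measure.pi fun _ : Fin n => (ρ Set.univ)⁻¹ • ρ)) Set.univ
      ≤ ∑' n : ℕ, ENNReal.ofReal (Real.exp (-(ρ Set.univ).toReal)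
          * ((ρ Set.univ).toReal ^ n / n.factorial)) := by
        refine ENNReal.tsum_le_tsum fun n => ?_
        rw [Measure.smul_apply, smul_eq_mul]
        exact le_trans (mul_le_mul_right (hmass n) _) (by rw [mul_one, hc n])
    _ = ENNReal.ofReal (∑' n : ℕ, Real.exp (-(ρ Set.univ).toReal)
          * ((ρ Set.univ).toReal ^ n / n.factorial)) :=
        (ENNReal.ofReal_tsum_of_nonneg (fun n => by positivity)
          ((Real.summable_pow_div_factorial _).mul_left _)).symm
    _ < ∞ := ENNReal.ofReal_lt_top

end PoissonPPAux

open PoissonPPAux in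
/-- Lemma 3.10: if `ν, ν'` are finite measures on a standard
Borel space with `ν' ≪ ν`, then `Π_{ν'} ≪ Π_ν` and, for `Π_ν`-a.e. finite
configuration `ξ = ∑ δ_{x i}`,
`dΠ_{ν'}/dΠ_ν(ξ) = exp(ν(S) - ν'(S)) · ∏_{x ∈ ξ} (dν'/dν)(x)`
(the product over the points of `ξ` counted with multiplicity; the empty product
is `1`).  If moreover `ν ∼ ν'` then `Π_ν ∼ Π_{ν'}`. -/
theorem poissonPP_rnDeriv
    {S : Type*} [MeasurableSpace S] [StandardBorelSpace S]
    (ν ν' : Measure S) [IsFiniteMeasure ν] [IsFiniteMeasure ν']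
    (hac : ν' ≪ ν) :
    poissonPP ν' ≪ poissonPP ν ∧
    (∀ n : ℕ,
      ∀ᵐ x ∂(Measure.pi fun _ : Fin n => (ν Set.univ)⁻¹ • ν),
        (poissonPP ν').rnDeriv (poissonPP ν) (∑ i, Measure.dirac (x i))
          = ENNReal.ofReal (Real.exp ((ν Set.univ).toReal - (ν' Set.univ).toReal)) *
              ∏ i, ν'.rnDeriv ν (x i)) ∧
    (ν ≪ ν' → (poissonPP ν ≪ poissonPP ν' ∧ poissonPP ν' ≪ poissonPP ν)) := by
  haveI := poissonPP_isFiniteMeasure ν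
  have hkey := poissonPP_eq ν ν' hac
  have hg : Measurable (gDen ν ν') := measurable_gDen ν ν'
  refine ⟨by rw [hkey]; exact withDensity_absolutelyContinuous _ _, ?_, fun h' =>
    ⟨by rw [poissonPP_eq ν' ν h']; exact withDensity_absolutelyContinuous _ _,
     by rw [hkey]; exact withDensity_absolutelyContinuous _ _⟩⟩
  intro n
  haveI := normFinite ν
  have hbase : (poissonPP ν').rnDeriv (poissonPP ν) =ᵐ[poissonPP ν] gDen ν ν' := by
    rw [hkey]
    exact Measure.rnDeriv_withDensity (poissonPP ν) hg
  rcases eq_or_ne (Measure.pi fun _ : Fin n => (ν Set.univ)⁻¹ • ν) 0 with h0 | h0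
  · simp [h0]
  · have hcn : (ENNReal.ofReal (Real.exp (-(ν Set.univ).toReal)) * (ν Set.univ) ^ n
        / n.factorial) ≠ 0 := by
      intro hc
      apply h0
      have hne1 : ENNReal.ofReal (Real.exp (-(ν Set.univ).toReal)) ≠ 0 := by
        simp [ENNReal.ofReal_eq_zero, not_le, Real.exp_pos]
      have h1 : (ν Set.univ) ^ n = 0 := by
        rcases ENNReal.div_eq_zero_iff.mp hc with h | h
        · rcases mul_eq_zero.mp h with h | h
          · exact absurd h hne1
          · exact h
        · exact absurd h (ENNReal.natCast_ne_top _)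
      have hn : n ≠ 0 := by rintro rfl; simp at h1
      have h2 : ν Set.univ = 0 := pow_eq_zero_iff hn |>.mp h1
      have h3 : ((ν Set.univ)⁻¹ • ν) = 0 := by
        rw [Measure.measure_univ_eq_zero.mp h2, smul_zero]
      simp only [h3]
      exact pi_zero hn
    have hmapac : Measure.map (fun x : Fin n → S => ∑ i, Measure.dirac (x i))
        (Measure.pi fun _ : Fin n => (ν Set.univ)⁻¹ • ν) ≪ poissonPP ν := by
      refine Measure.AbsolutelyContinuous.mk fun s hs h => ?_
      simp only [poissonPP] at h
      rw [Measure.sum_apply _ hs] at h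
      have hterm := ENNReal.tsum_eq_zero.mp h n
      rw [Measure.smul_apply, smul_eq_mul] at hterm
      exact (mul_eq_zero.mp hterm).resolve_left hcn
    have h1 := hmapac.ae_le hbase
    have h2 := ae_of_ae_map (measurable_T n).aemeasurable h1
    filter_upwards [h2, ae_forall_ne_top ν ν' n] with x hx1 hx2
    rw [hx1]
    simp only [gDen]
    rw [prod_repr (Measure.measurable_rnDeriv ν' ν) x hx2]
end

section
/- Let (M_1,…,M_m) be an ℕ^m-valued random vector on a probability space such that E[∏_{j=1}^m b_j^{2M_j}] < ∞ for every (b_1,…,b_m) ∈ (0,∞)^m. Then the closed linear span in L² of the set of random variables {∏_{j=1}^m b_j^{M_j} : (b_1,…,b_m) ∈ (0,∞)^m} equals L² of the σ-field σ(M_1,…,M_m), i.e., these exponential monomials are total in L²(σ(M_1,…,M_m)). -/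
open MeasureTheory Filter
open scoped ENNReal NNReal Topology

private lemma aux_one_var_zero (a : ℕ → ℂ) (hsum : Summable (fun k => ‖a k‖))
    (hzero : ∀ x : ℝ, 0 < x → x ≤ 1 → ∑' k, a k * (x : ℂ) ^ k = 0) :
    a 0 = 0 := by
  set C : ℝ := ∑' k, ‖a (k + 1)‖ with hC
  have hsum' : Summable (fun k => ‖a (k + 1)‖) :=
    hsum.comp_injective (add_left_injective 1)
  have key : ∀ x : ℝ, 0 < x → x ≤ 1 → ‖a 0‖ ≤ C * x := by
    intro x hx hx1
    have hxk : ∀ k : ℕ, ‖a k * (x : ℂ) ^ k‖ = ‖a k‖ * x ^ k := by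
      intro k
      rw [norm_mul, norm_pow, Complex.norm_real, Real.norm_of_nonneg hx.le]
    have hnormsum : Summable (fun k => ‖a k * (x : ℂ) ^ k‖) := by
      apply Summable.of_nonneg_of_le (fun k => norm_nonneg _) (fun k => ?_) hsum
      rw [hxk]
      calc ‖a k‖ * x ^ k ≤ ‖a k‖ * 1 := by
            exact mul_le_mul_of_nonneg_left (pow_le_one₀ hx.le hx1) (norm_nonneg _)
        _ = ‖a k‖ := mul_one _
    have hsummable : Summable (fun k => a k * (x : ℂ) ^ k) := hnormsum.of_norm
    have h0 := hzero x hx hx1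
    rw [Summable.tsum_eq_zero_add hsummable] at h0
    simp only [pow_zero, mul_one] at h0
    have ha0 : a 0 = -∑' k, a (k + 1) * (x : ℂ) ^ (k + 1) := by linear_combination h0
    rw [ha0, norm_neg]
    have hns : Summable (fun k => a (k + 1) * (x : ℂ) ^ (k + 1)) :=
      hsummable.comp_injective (add_left_injective 1)
    calc ‖∑' k, a (k + 1) * (x : ℂ) ^ (k + 1)‖
        ≤ ∑' k, ‖a (k + 1) * (x : ℂ) ^ (k + 1)‖ :=
          norm_tsum_le_tsum_norm (hnormsum.comp_injective (add_left_injective 1))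
      _ ≤ ∑' k, ‖a (k + 1)‖ * x := by
          apply Summable.tsum_le_tsum _ (hnormsum.comp_injective (add_left_injective 1))
            (hsum'.mul_right x)
          intro k
          show ‖a (k+1) * (x:ℂ)^(k+1)‖ ≤ _
          rw [hxk]
          apply mul_le_mul_of_nonneg_left _ (norm_nonneg _)
          calc x ^ (k + 1) = x * x ^ k := by ring
            _ ≤ x * 1 := mul_le_mul_of_nonneg_left (pow_le_one₀ hx.le hx1) hx.le
            _ = x := mul_one x
      _ = C * x := by rw [tsum_mul_right]
  have hle : ‖a 0‖ ≤ 0 := by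
    have htend : Tendsto (fun x : ℝ => C * x) (𝓝[>] (0:ℝ)) (𝓝 0) := by
      have : Tendsto (fun x : ℝ => C * x) (𝓝 0) (𝓝 (C * 0)) :=
        (tendsto_id.const_mul C)
      simpa using this.mono_left nhdsWithin_le_nhds
    apply ge_of_tendsto htend
    · filter_upwards [Ioc_mem_nhdsGT_of_mem (by norm_num : (0:ℝ) ∈ Set.Ico 0 1)]
        with x hx
      exact key x hx.1 hx.2
  simpa using norm_le_zero_iff.mp hle

private lemma aux_one_var (a : ℕ → ℂ) (hsum : Summable (fun k => ‖a k‖))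
    (hzero : ∀ x : ℝ, 0 < x → x ≤ 1 → ∑' k, a k * (x : ℂ) ^ k = 0) :
    ∀ k, a k = 0 := by
  intro k
  induction k generalizing a with
  | zero => exact aux_one_var_zero a hsum hzero
  | succ k ih =>
    refine ih (fun k => a (k + 1)) (hsum.comp_injective (add_left_injective 1)) ?_
    intro x hx hx1
    have h0 : a 0 = 0 := aux_one_var_zero a hsum hzero
    have hnormsum : Summable (fun k => ‖a k * (x : ℂ) ^ k‖) := by
      apply Summable.of_nonneg_of_le (fun k => norm_nonneg _) (fun k => ?_) hsum
      rw [norm_mul, norm_pow, Complex.norm_real, Real.norm_of_nonneg hx.le]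
      calc ‖a k‖ * x ^ k ≤ ‖a k‖ * 1 :=
            mul_le_mul_of_nonneg_left (pow_le_one₀ hx.le hx1) (norm_nonneg _)
        _ = ‖a k‖ := mul_one _
    have hsummable : Summable (fun k => a k * (x : ℂ) ^ k) := hnormsum.of_norm
    have h := hzero x hx hx1
    rw [Summable.tsum_eq_zero_add hsummable, h0] at h
    simp only [zero_mul, zero_add] at h
    have hx0 : (x : ℂ) ≠ 0 := by exact_mod_cast hx.ne'
    have : (∑' k, a (k + 1) * (x : ℂ) ^ k) * (x : ℂ) = 0 := by
      rw [← tsum_mul_right]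
      rw [← h]
      congr 1
      ext k
      ring
    rcases mul_eq_zero.mp this with h' | h'
    · exact h'
    · exact absurd h' hx0

private lemma aux_multi : ∀ (m : ℕ) (c : (Fin m → ℕ) → ℂ),
    (∀ b : Fin m → ℝ, (∀ j, 0 < b j) → (∀ j, b j ≤ 1) →
      Summable (fun n : Fin m → ℕ => ‖c n‖ * ∏ j, b j ^ n j)) →
    (∀ b : Fin m → ℝ, (∀ j, 0 < b j) → (∀ j, b j ≤ 1) →
      ∑' n : Fin m → ℕ, c n * ∏ j, ((b j : ℂ)) ^ n j = 0) →
    ∀ n, c n = 0 := by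
  intro m
  induction m with
  | zero =>
    intro c hs hz n
    have h := hz (fun j => j.elim0) (fun j => j.elim0) (fun j => j.elim0)
    rw [tsum_eq_single n (fun n' hn' => absurd (Subsingleton.elim n' n) hn')] at h
    simpa using h
  | succ m ih =>
    intro c hs hz n
    -- the equivalence ℕ × (Fin m → ℕ) ≃ (Fin (m+1) → ℕ)
    set e : ℕ × (Fin m → ℕ) ≃ (Fin (m + 1) → ℕ) := Fin.consEquiv (fun _ => ℕ) with he
    have hep : ∀ p : ℕ × (Fin m → ℕ), e p = Fin.cons p.1 p.2 := fun p => rfl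
    have hprodR : ∀ (x : ℝ) (b' : Fin m → ℝ) (k : ℕ) (n' : Fin m → ℕ),
        (∏ j : Fin (m + 1), Fin.cons x b' j ^ (Fin.cons k n' : Fin (m+1) → ℕ) j)
          = x ^ k * ∏ j, b' j ^ n' j := by
      intro x b' k n'
      rw [Fin.prod_univ_succ]
      simp
    have hprodC : ∀ (x : ℝ) (b' : Fin m → ℝ) (k : ℕ) (n' : Fin m → ℕ),
        (∏ j : Fin (m + 1), (((Fin.cons x b' : Fin (m+1) → ℝ) j : ℝ) : ℂ) ^ (Fin.cons k n' : Fin (m+1) → ℕ) j)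
          = (x : ℂ) ^ k * ∏ j, ((b' j : ℂ)) ^ n' j := by
      intro x b' k n'
      rw [Fin.prod_univ_succ]
      simp
    -- joint norm summability transferred to the product
    have hjoint : ∀ (x : ℝ) (b' : Fin m → ℝ), 0 < x → x ≤ 1 →
        (∀ j, 0 < b' j) → (∀ j, b' j ≤ 1) →
        Summable (fun p : ℕ × (Fin m → ℕ) =>
          ‖c (Fin.cons p.1 p.2)‖ * (x ^ p.1 * ∏ j, b' j ^ p.2 j)) := by
      intro x b' hx hx1 hb' hb'1
      have h := hs (Fin.cons x b') (fun j => j.cases hx hb') (fun j => j.cases hx1 hb'1)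
      have h2 := (Equiv.summable_iff e).mpr h
      refine h2.congr (fun p => ?_)
      show ‖c (e p)‖ * ∏ j : Fin (m+1), Fin.cons x b' j ^ (e p) j = _
      rw [hep p, hprodR]
    -- the key vanishing of fiber sums
    have key : ∀ (k : ℕ) (b' : Fin m → ℝ), (∀ j, 0 < b' j) → (∀ j, b' j ≤ 1) →
        ∑' n' : Fin m → ℕ, c (Fin.cons k n') * ∏ j, ((b' j : ℂ)) ^ n' j = 0 := by
      intro k b' hb' hb'1
      refine aux_one_var
        (fun k => ∑' n' : Fin m → ℕ, c (Fin.cons k n') * ∏ j, ((b' j : ℂ)) ^ n' j)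
        ?_ ?_ k
      · -- summability of the fiber sums
        have hj := hjoint 1 b' one_pos le_rfl hb' hb'1
        simp only [one_pow, one_mul] at hj
        have hA : Summable (fun k : ℕ =>
            ∑' n' : Fin m → ℕ, ‖c (Fin.cons k n')‖ * ∏ j, b' j ^ n' j) := by
          have hfib : ∀ k : ℕ, HasSum
              (fun n' : Fin m → ℕ => ‖c (Fin.cons k n')‖ * ∏ j, b' j ^ n' j)
              (∑' n' : Fin m → ℕ, ‖c (Fin.cons k n')‖ * ∏ j, b' j ^ n' j) :=
            fun k => (hj.prod_factor k).hasSum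
          exact ⟨_, HasSum.prod_fiberwise hj.hasSum hfib⟩
        apply Summable.of_nonneg_of_le (fun k => norm_nonneg _) (fun k => ?_) hA
        calc ‖∑' n' : Fin m → ℕ, c (Fin.cons k n') * ∏ j, ((b' j : ℂ)) ^ n' j‖
            ≤ ∑' n' : Fin m → ℕ, ‖c (Fin.cons k n') * ∏ j, ((b' j : ℂ)) ^ n' j‖ := by
              apply norm_tsum_le_tsum_norm
              refine (hj.prod_factor k).congr (fun n' => ?_)
              rw [norm_mul]
              congr 1
              rw [norm_prod]
              exact Finset.prod_congr rfl (fun j _ => by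
                rw [norm_pow, Complex.norm_real, Real.norm_of_nonneg (hb' j).le])
          _ = ∑' n' : Fin m → ℕ, ‖c (Fin.cons k n')‖ * ∏ j, b' j ^ n' j := by
              apply tsum_congr
              intro n'
              rw [norm_mul, norm_prod]
              congr 1
              exact Finset.prod_congr rfl (fun j _ => by
                rw [norm_pow, Complex.norm_real, Real.norm_of_nonneg (hb' j).le])
      · -- fiber sums against x^k vanish
        intro x hx hx1
        have hjn := hjoint x b' hx hx1 hb' hb'1
        have hsummable : Summable (fun p : ℕ × (Fin m → ℕ) =>
            c (Fin.cons p.1 p.2) * ((x : ℂ) ^ p.1 * ∏ j, ((b' j : ℂ)) ^ p.2 j)) := by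
          apply Summable.of_norm
          refine hjn.congr (fun p => ?_)
          rw [norm_mul, norm_mul, norm_pow, norm_prod, Complex.norm_real,
            Real.norm_of_nonneg hx.le]
          congr 2
          exact Finset.prod_congr rfl (fun j _ => by
            rw [norm_pow, Complex.norm_real, Real.norm_of_nonneg (hb' j).le])
        have hz' := hz (Fin.cons x b') (fun j => j.cases hx hb') (fun j => j.cases hx1 hb'1)
        rw [← e.tsum_eq] at hz'
        have heq : ∀ p : ℕ × (Fin m → ℕ),
            c (e p) * ∏ j : Fin (m+1), (((Fin.cons x b' : Fin (m+1) → ℝ) j : ℝ) : ℂ) ^ (e p) j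
              = c (Fin.cons p.1 p.2) * ((x : ℂ) ^ p.1 * ∏ j, ((b' j : ℂ)) ^ p.2 j) := by
          intro p
          rw [hep p, hprodC]
        rw [tsum_congr heq, Summable.tsum_prod' hsummable (fun k => hsummable.prod_factor k)] at hz'
        rw [← hz']
        apply tsum_congr
        intro k
        rw [← tsum_mul_right]
        apply tsum_congr
        intro n'
        ring
    -- apply the inductive hypothesis to the fiber at n 0
    have := ih (fun n' => c (Fin.cons (n 0) n')) ?_ ?_ (Fin.tail n)
    · simpa [Fin.cons_self_tail] using this
    · intro b' hb' hb'1
      have hj := hjoint 1 b' one_pos le_rfl hb' hb'1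
      have := hj.prod_factor (n 0)
      simpa using this
    · intro b' hb' hb'1
      exact key (n 0) b' hb' hb'1

/-- Lemma 3.13: let `(M_1,…,M_m)` be an `ℕ^m`-valued random
vector with `E[∏ b_j^{2 M_j}] < ∞` for all `b ∈ (0,∞)^m`.  Then the exponential
monomials `∏ b_j^{M_j}` are total in `L²(σ(M_1,…,M_m))`: they are square-integrable,
and every `F ∈ L²(σ(M_1,…,M_m))` orthogonal to all of them vanishes a.s. -/
theorem exponential_monomials_total
    {Ω : Type*} [MeasurableSpace Ω] (P : Measure Ω) [IsProbabilityMeasure P]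
    (m : ℕ) (M : Fin m → Ω → ℕ) (hM : ∀ j, Measurable (M j))
    (hmom : ∀ b : Fin m → ℝ, (∀ j, 0 < b j) →
      ∫⁻ ω, ENNReal.ofReal (∏ j, (b j) ^ (2 * M j ω)) ∂P < ⊤) :
    (∀ b : Fin m → ℝ, (∀ j, 0 < b j) →
      MemLp (fun ω => ∏ j, ((b j : ℂ)) ^ (M j ω)) 2 P) ∧
    (∀ F : Ω → ℂ, MemLp F 2 P →
      Measurable[MeasurableSpace.comap (fun ω (j : Fin m) => M j ω) inferInstance] F →
      (∀ b : Fin m → ℝ, (∀ j, 0 < b j) →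
        ∫ ω, F ω * (starRingEnd ℂ) (∏ j, ((b j : ℂ)) ^ (M j ω)) ∂P = 0) →
      F =ᵐ[P] 0) := by
  -- basic measurability facts
  have hmono_meas : ∀ b : Fin m → ℝ,
      Measurable (fun ω => ∏ j, ((b j : ℂ)) ^ (M j ω)) := by
    intro b
    apply Finset.measurable_prod
    intro j _
    exact (measurable_of_countable (fun k : ℕ => ((b j : ℂ)) ^ k)).comp (hM j)
  have hnorm : ∀ (b : Fin m → ℝ), (∀ j, 0 < b j) → ∀ (n : Fin m → ℕ),
      ‖∏ j, ((b j : ℂ)) ^ n j‖ = ∏ j, (b j) ^ n j := by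
    intro b hb n
    rw [norm_prod]
    exact Finset.prod_congr rfl fun j _ => by
      rw [norm_pow, Complex.norm_real, Real.norm_of_nonneg (hb j).le]
  have hmemℒp : ∀ b : Fin m → ℝ, (∀ j, 0 < b j) →
      MemLp (fun ω => ∏ j, ((b j : ℂ)) ^ (M j ω)) 2 P := by
    intro b hb
    rw [memLp_two_iff_integrable_sq_norm (hmono_meas b).aestronglyMeasurable]
    refine ⟨(((hmono_meas b).norm).pow_const 2).aestronglyMeasurable, ?_⟩
    rw [hasFiniteIntegral_iff_ofReal (ae_of_all _ fun ω => sq_nonneg _)]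
    have heq : ∀ ω, ‖∏ j, ((b j : ℂ)) ^ (M j ω)‖ ^ 2 = ∏ j, (b j) ^ (2 * M j ω) := by
      intro ω
      rw [hnorm b hb]
      rw [← Finset.prod_pow]
      exact Finset.prod_congr rfl fun j _ => by rw [← pow_mul, mul_comm (M j ω) 2]
    calc ∫⁻ ω, ENNReal.ofReal (‖∏ j, ((b j : ℂ)) ^ (M j ω)‖ ^ 2) ∂P
        = ∫⁻ ω, ENNReal.ofReal (∏ j, (b j) ^ (2 * M j ω)) ∂P := by
          apply lintegral_congr; intro ω; rw [heq ω]
      _ < ⊤ := hmom b hb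
  refine ⟨hmemℒp, ?_⟩
  intro F hF hFmeas horth
  set φ : Ω → (Fin m → ℕ) := fun ω j => M j ω with hφdef
  have hφ : Measurable φ := measurable_pi_lambda _ hM
  set μ : Measure (Fin m → ℕ) := P.map φ with hμdef
  have : IsProbabilityMeasure μ := Measure.isProbabilityMeasure_map hφ.aemeasurable
  -- F factors through φ
  have hfac : ∀ ω ω', φ ω = φ ω' → F ω = F ω' := by
    intro ω ω' hE
    obtain ⟨s, hsm, hs⟩ :=
      MeasurableSpace.measurableSet_comap.mp (hFmeas (measurableSet_singleton (F ω)))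
    have hω : ω ∈ F ⁻¹' {F ω} := rfl
    rw [← hs] at hω
    have hω' : ω' ∈ φ ⁻¹' s := by rwa [Set.mem_preimage, ← hE]
    rw [hs] at hω'
    exact (Set.mem_singleton_iff.mp hω').symm
  classical
  set g : (Fin m → ℕ) → ℂ := fun n => if h : ∃ ω, φ ω = n then F h.choose else 0 with hgdef
  have hFg : ∀ ω, F ω = g (φ ω) := by
    intro ω
    have hex : ∃ ω', φ ω' = φ ω := ⟨ω, rfl⟩
    rw [hgdef]
    simp only [dif_pos hex]
    exact hfac ω hex.choose hex.choose_spec.symm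
  -- conjugate of the monomial is itself
  have hconj : ∀ (b : Fin m → ℝ) (ω : Ω),
      (starRingEnd ℂ) (∏ j, ((b j : ℂ)) ^ (M j ω)) = ∏ j, ((b j : ℂ)) ^ (M j ω) := by
    intro b ω
    rw [map_prod]
    exact Finset.prod_congr rfl fun j _ => by rw [map_pow, Complex.conj_ofReal]
  -- integrability of F times the monomial
  have hint : ∀ b : Fin m → ℝ, (∀ j, 0 < b j) →
      Integrable (fun ω => F ω * ∏ j, ((b j : ℂ)) ^ (M j ω)) P := by
    intro b hb
    have h1 : MemLp ((fun ω => ∏ j, ((b j : ℂ)) ^ (M j ω)) • F) 1 P :=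
      hF.smul (hmemℒp b hb)
    have := memLp_one_iff_integrable.mp h1
    refine this.congr ?_
    apply ae_of_all
    intro ω
    simp [mul_comm]
  -- transfer the orthogonality relation to a sum over ℕ^m
  have hGint : ∀ b : Fin m → ℝ, (∀ j, 0 < b j) →
      Integrable (fun n => g n * ∏ j, ((b j : ℂ)) ^ n j) μ := by
    intro b hb
    rw [hμdef, integrable_map_measure
      (measurable_of_countable _).aestronglyMeasurable hφ.aemeasurable]
    refine (hint b hb).congr (ae_of_all _ fun ω => ?_)
    simp only [Function.comp]
    rw [← hFg ω]
  have hsum0 : ∀ b : Fin m → ℝ, (∀ j, 0 < b j) →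
      ∑' n, (μ {n}).toReal • (g n * ∏ j, ((b j : ℂ)) ^ n j) = 0 := by
    intro b hb
    change ∑' n, μ.real {n} • (g n * ∏ j, ((b j : ℂ)) ^ n j) = 0
    rw [← integral_countable' (hGint b hb)]
    rw [hμdef, integral_map hφ.aemeasurable (measurable_of_countable _).aestronglyMeasurable]
    rw [← horth b hb]
    refine integral_congr_ae (ae_of_all _ fun ω => ?_)
    show g (φ ω) * ∏ j, ((b j : ℂ)) ^ (φ ω j)
      = F ω * (starRingEnd ℂ) (∏ j, ((b j : ℂ)) ^ (M j ω))
    rw [hconj b ω, ← hFg ω]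
  -- summability of the coefficient family
  have hsummable : ∀ b : Fin m → ℝ, (∀ j, 0 < b j) →
      Summable (fun n => ‖(μ {n}).toReal • g n‖ * ∏ j, (b j) ^ n j) := by
    intro b hb
    have h1 : ∫⁻ n, ‖g n * ∏ j, ((b j : ℂ)) ^ n j‖₊ ∂μ < ⊤ := (hGint b hb).2
    rw [lintegral_countable'] at h1
    have h2 := ENNReal.summable_toReal h1.ne
    refine h2.congr fun n => ?_
    rw [ENNReal.toReal_mul, ENNReal.coe_toReal, coe_nnnorm, norm_mul, hnorm b hb,
      norm_smul, Real.norm_of_nonneg ENNReal.toReal_nonneg]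
    ring
  -- apply the uniqueness result
  have hc : ∀ n, (μ {n}).toReal • g n = 0 := by
    apply aux_multi m (fun n => (μ {n}).toReal • g n)
    · intro b hb _; exact hsummable b hb
    · intro b hb _
      rw [← hsum0 b hb]
      apply tsum_congr
      intro n
      rw [smul_mul_assoc]
  -- conclude that F vanishes a.e.
  have hgset : μ {n | g n ≠ 0} = 0 := by
    have hc' : ∀ n ∈ {n | g n ≠ 0}, μ {n} = 0 := by
      intro n hn
      rcases smul_eq_zero.mp (hc n) with h | h
      · exact (ENNReal.toReal_eq_zero_iff _).mp h |>.resolve_right (measure_ne_top μ _)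
      · exact absurd h hn
    have := (measure_biUnion_null_iff (Set.to_countable {n | g n ≠ 0})).mpr
      (fun n hn => hc' n hn)
    rwa [Set.biUnion_of_singleton] at this
  rw [Filter.eventuallyEq_iff_exists_mem]
  refine ⟨{ω | g (φ ω) = 0}, ?_, fun ω hω => by rw [hFg ω]; exact hω⟩
  rw [mem_ae_iff]
  have hpre : {ω | g (φ ω) = 0}ᶜ = φ ⁻¹' {n | g n ≠ 0} := by
    ext ω; simp
  rw [hpre, ← Measure.map_apply hφ (Set.to_countable _).measurableSet, ← hμdef]
  exact hgset
end
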